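/- arXiv:1502.01183 — 4 statements merged into one kernel-verified Lean document; each statement's English description precedes it below -/
import Mathlib

section
/- There is no n and no shifted simplicial complex Δ on [n] of dimension 3 whose h̃-triangle (h̃_{i,j})_{0≤j≤i≤4} has rows (1), (1,5), (1,4,7), (1,3,3,4), (1,2,0,0,0); that is, h̃_{0,0}=1, (h̃_{1,0},h̃_{1,1})=(1,5), (h̃_{2,0},h̃_{2,1},h̃_{2,2})=(1,4,7), (h̃_{3,0},…,h̃_{3,3})=(1,3,3,4), (h̃_{4,0},…,h̃_{4,4})=(1,2,0,0,0). -/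
open Finset

noncomputable section

/-- The largest `a` with `C(a,ℓ) ≤ p` (searched within a sufficient bound). -/
def largestBinom (ℓ p : ℕ) : ℕ :=
  Nat.findGreatest (fun a => Nat.choose a ℓ ≤ p) (p + ℓ)

/-- The Macaulay lower shadow `∂^ℓ(p)`, computed from the `ℓ`-representation
`p = C(a_ℓ,ℓ) + ⋯ + C(a_e,e)` via the greedy algorithm; `∂^ℓ(0) = 0`. -/
def mshadow : ℕ → ℕ → ℕ
  | 0, _ => 0
  | (ℓ+1), p =>
    if p = 0 then 0
    else Nat.choose (largestBinom (ℓ+1) p - 1) ℓ +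
      mshadow ℓ (p - Nat.choose (largestBinom (ℓ+1) p) (ℓ+1))

/-- `(f 0, f 1, …, f d)` is an M-sequence (of nonnegative integers):
`f 0 = 1` and `∂^ℓ(f ℓ) ≤ f (ℓ-1)` for `1 ≤ ℓ ≤ d`. -/
def IsMSeqI (f : ℕ → ℤ) (d : ℕ) : Prop :=
  f 0 = 1 ∧ (∀ ℓ ≤ d, 0 ≤ f ℓ) ∧
    ∀ ℓ, 1 ≤ ℓ → ℓ ≤ d → (mshadow ℓ (f ℓ).toNat : ℤ) ≤ f (ℓ - 1)

/-- A simplicial complex on `[n]`: a family of subsets closed under taking subsets. -/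
def IsCplx {n : ℕ} (Δ : Set (Finset (Fin n))) : Prop :=
  ∀ F ∈ Δ, ∀ G, G ⊆ F → G ∈ Δ

/-- A shifted family on `[n]`: replacing a smaller element by a larger one stays in the family. -/
def ShiftedCplx {n : ℕ} (Δ : Set (Finset (Fin n))) : Prop :=
  ∀ F ∈ Δ, ∀ r s : Fin n, r < s → r ∈ F → s ∉ F → insert s (F.erase r) ∈ Δ

/-- `F` is a facet (inclusion-maximal member) of `Δ`. -/
def IsFacet {n : ℕ} (Δ : Set (Finset (Fin n))) (F : Finset (Fin n)) : Prop :=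
  F ∈ Δ ∧ ∀ G ∈ Δ, F ⊆ G → F = G

/-- `fvec Δ i` is the number of faces of cardinality `i` (that is, `f_{i-1}`). -/
def fvec {n : ℕ} (Δ : Set (Finset (Fin n))) (i : ℕ) : ℕ :=
  {F ∈ Δ | F.card = i}.ncard

/-- The `h`-vector of a `(d-1)`-complex, defined by
`Σ h_j y^j = Σ f_{i-1} (1-y)^{d-i} y^i`, i.e. `h_j = Σ_{i≤j} (-1)^{j-i} C(d-i, j-i) f_{i-1}`. -/
def hvec {n : ℕ} (d : ℕ) (Δ : Set (Finset (Fin n))) (j : ℕ) : ℤ :=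
  ∑ i ∈ Finset.range (j + 1),
    (-1 : ℤ) ^ (j - i) * (Nat.choose (d - i) (j - i) : ℤ) * (fvec Δ i : ℤ)

/-- The pure skeleton of `Δ` whose facets are the faces of cardinality `c`
(the pure `(c-1)`-skeleton `Δ^[c-1]`). -/
def pureSkel {n : ℕ} (Δ : Set (Finset (Fin n))) (c : ℕ) : Set (Finset (Fin n)) :=
  {G | ∃ F ∈ Δ, F.card = c ∧ G ⊆ F}

/-- The `h̃`-triangle: `h̃_{i,j} = h_j(Δ^[i-1])`. -/
def htilde {n : ℕ} (Δ : Set (Finset (Fin n))) (i j : ℕ) : ℤ :=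
  hvec i (pureSkel Δ i) j

/-- The `h`-triangle: `h_{i,j} = h̃_{i,j} - Σ_{ℓ≤j} h̃_{i+1,ℓ}`. -/
def htri {n : ℕ} (Δ : Set (Finset (Fin n))) (i j : ℕ) : ℤ :=
  htilde Δ i j - ∑ ℓ ∈ Finset.range (j + 1), htilde Δ (i + 1) ℓ

/-- `σ(F)`: the longest terminal segment `{s, s+1, …, n}` contained in `F`
(empty if the last vertex is not in `F`). -/
def sigmaSeg {n : ℕ} (F : Finset (Fin n)) : Finset (Fin n) :=
  Finset.univ.filter (fun k => ∀ l, k ≤ l → l ∈ F)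

/-- The degree of a monomial, given by its exponent vector. -/
def degM {k : ℕ} (m : Fin k → ℕ) : ℕ := ∑ i, m i

/-- The monomial `m` only involves the first `r` variables `w_1, …, w_r`. -/
def SupportedOn {k : ℕ} (r : ℕ) (m : Fin k → ℕ) : Prop :=
  ∀ i : Fin k, r ≤ (i : ℕ) → m i = 0

/-- A multicomplex: a set of monomials closed under divisibility. -/
def IsMulticx {k : ℕ} (M : Set (Fin k → ℕ)) : Prop :=
  ∀ m ∈ M, ∀ m' : Fin k → ℕ, (∀ i, m' i ≤ m i) → m' ∈ M

/-- The monomial `w_j ⬝ (m / w_i)`. -/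
def shiftMove {k : ℕ} (m : Fin k → ℕ) (i j : Fin k) : Fin k → ℕ :=
  fun t => if t = i then m i - 1 else if t = j then m j + 1 else m t

/-- A shifted multicomplex (on the first `r` variables). -/
def ShiftedMC {k : ℕ} (r : ℕ) (M : Set (Fin k → ℕ)) : Prop :=
  ∀ m ∈ M, ∀ i j : Fin k, i < j → (j : ℕ) < r → 0 < m i → shiftMove m i j ∈ M

/-- Viewing `F` as the set of north-step positions of a lattice path, `xcoordS F p` is the
x-coordinate of the step at position `p`, i.e. the number of east steps strictly before `p`. -/
def xcoordS {k : ℕ} (F : Finset (Fin k)) (p : Fin k) : ℕ :=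
  (Finset.univ.filter (fun j => j < p ∧ j ∉ F)).card

/-- `ψ = λ ∘ ν⁻¹` : the monomial on `W_r` associated to an `a`-subset `F` of `[r+a]`;
the exponent of `w_{i+1}` is the number of north steps with x-coordinate `i`. -/
def psiM (r : ℕ) {k : ℕ} (F : Finset (Fin k)) : Fin k → ℕ :=
  fun i => if (i : ℕ) < r then (F.filter (fun p => xcoordS F p = (i : ℕ))).card else 0

/-- The partial sum `m_1 + ⋯ + m_i` of exponents strictly before position `i`. -/
def psum {k : ℕ} (m : Fin k → ℕ) (i : Fin k) : ℕ :=
  ∑ j ∈ Finset.univ.filter (fun j => j < i), m j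

/-- `φ = ν ∘ λ⁻¹` : the set of north-step positions of the lattice path associated to a
monomial `m` on the first `r` variables (the remaining north steps lie in the last column). -/
def phiM (r : ℕ) {k : ℕ} (m : Fin k → ℕ) : Finset (Fin k) :=
  Finset.univ.filter (fun p =>
    (∃ i : Fin k, (i : ℕ) < r ∧ psum m i + (i : ℕ) ≤ (p : ℕ) ∧
        (p : ℕ) < psum m i + m i + (i : ℕ)) ∨
    degM m + r ≤ (p : ℕ))

/-- The `a`-cone of `M` in the variable with (0-indexed) index `t`:
`{ w_{t+1}^ℓ · m : m ∈ M, deg m + ℓ < a }`. -/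
def coneMC {k : ℕ} (t a : ℕ) (M : Set (Fin k → ℕ)) : Set (Fin k → ℕ) :=
  {p | ∃ m ∈ M, ∃ ℓ : ℕ, degM m + ℓ < a ∧
    p = fun i : Fin k => if (i : ℕ) = t then m i + ℓ else m i}

/-- `Φ(M)`: the simplicial complex whose facets are the sets `φ(m)`, `m ∈ M`. -/
def PhiCplx (r : ℕ) {k : ℕ} (M : Set (Fin k → ℕ)) : Set (Finset (Fin k)) :=
  {G | ∃ m ∈ M, G ⊆ phiM r m}

/-- A `d`-metacomplex on `n`: a sequence of multicomplexes `M^[i]` on `{w_1,…,w_{n-i}}`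
of degree `≤ i` with `C^i M^[i] ⊆ M^[i-1]`. -/
def IsMeta (n d : ℕ) (M : ℕ → Set (Fin n → ℕ)) : Prop :=
  (∀ i ≤ d, IsMulticx (M i) ∧ ∀ m ∈ M i, SupportedOn (n - i) m ∧ degM m ≤ i) ∧
  (∀ i, 1 ≤ i → i ≤ d → coneMC (n - i) i (M i) ⊆ M (i - 1))

/-- A metacomplex is shifted if all its multicomplexes are. -/
def ShiftedMeta (n d : ℕ) (M : ℕ → Set (Fin n → ℕ)) : Prop :=
  ∀ i ≤ d, ShiftedMC (n - i) (M i)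

/-- The `f`-triangle of a metacomplex: `f_{i,j}` = number of degree-`j` monomials in `M^[i]`. -/
def ftri (n : ℕ) (M : ℕ → Set (Fin n → ℕ)) (i j : ℕ) : ℕ :=
  {m ∈ M i | degM m = j}.ncard

/-- `Φ̄(𝓜) = ⋃_{i≤d} {φ^i(m) : m ∈ M^[i]}`. -/
def PhiBar (n d : ℕ) (M : ℕ → Set (Fin n → ℕ)) : Set (Finset (Fin n)) :=
  {F | ∃ i ≤ d, ∃ m ∈ M i, F = phiM (n - i) m}

/-- `Ψ̄(Δ)`: the metacomplex with `M^[i] = {ψ(F) : F ∈ Δ, |F| = i}`. -/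
def PsiBar (n : ℕ) (Δ : Set (Finset (Fin n))) : ℕ → Set (Fin n → ℕ) :=
  fun i => {p | ∃ F ∈ Δ, F.card = i ∧ p = psiM (n - i) F}

/-- The (finite) set of all monomials of degree `≤ t` in the variables `u_1, …, u_s`. -/
def monos (s t : ℕ) : Finset (Fin s → ℕ) :=
  ((Finset.univ : Finset (Fin s → Fin (t + 1))).image
      (fun f => fun i => ((f i : ℕ)))).filter (fun m => degM m ≤ t)

/-- An `M_{s,t}`-array: a positive-integer valued function on monomials of degree `≤ t`
in `u_1,…,u_s` satisfying conditions (1)–(3) of Definition 4.1. -/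
def IsMArray (s t : ℕ) (q : (Fin s → ℕ) → ℕ) : Prop :=
  (∀ m, degM m ≤ t → 0 < q m) ∧
  (∀ m, degM m ≤ t → ∀ i j : Fin s, i < j → 0 < m i → q m ≤ q (shiftMove m i j)) ∧
  (∀ m, degM m = t → q m = 1) ∧
  (∀ m, degM m < t → ∀ j : Fin s,
    mshadow (t - degM m) (q m) ≤ q (fun x => if x = j then m x + 1 else m x))

/-- An `M_{s,t}(h)`-composition of `r`: an `M_{s,t}`-array with `q^m ≥ h_{t - deg m}`
and `Σ_m q^m = r`. -/
def IsComposition (s t : ℕ) (h : ℕ → ℤ) (r : ℤ) (q : (Fin s → ℕ) → ℕ) : Prop :=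
  IsMArray s t q ∧ (∀ m, degM m ≤ t → h (t - degM m) ≤ (q m : ℤ)) ∧
  (∑ m ∈ monos s t, (q m : ℤ)) = r

/-- `Σ_s 𝒟`: the sum of the `q^m` over monomials divisible by the last variable `u_s`. -/
def SigmaLast (s t : ℕ) (q : (Fin s → ℕ) → ℕ) : ℕ :=
  ∑ m ∈ (monos s t).filter (fun m => ∃ i : Fin s, (i : ℕ) = s - 1 ∧ 0 < m i), q m

/-- `ρ_{s,t}(r;h) = min { Σ_s 𝒟 : 𝒟 an M_{s,t}(h)-composition of r }`. -/
def rho (s t : ℕ) (h : ℕ → ℤ) (r : ℤ) : ℕ :=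
  sInf {v : ℕ | ∃ q, IsComposition s t h r q ∧ SigmaLast s t q = v}

/-- A minimal non-face of `Δ`. -/
def IsMinNonface {n : ℕ} (Δ : Set (Finset (Fin n))) (G : Finset (Fin n)) : Prop :=
  G ∉ Δ ∧ ∀ G' ⊂ G, G' ∈ Δ

/-- The Alexander dual `Δ* = {F : [n]∖F ∉ Δ}`. -/
def dualCplx {n : ℕ} (Δ : Set (Finset (Fin n))) : Set (Finset (Fin n)) :=
  {F | Fᶜ ∉ Δ}

/-- `m_{ℓ,k}(Δ)`: the number of minimal non-faces `G` of `Δ` with `|G| = k` and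
`max G = ℓ + k - 1` (vertices labelled `1, …, n`). -/
def mGen {n : ℕ} (Δ : Set (Finset (Fin n))) (ℓ k : ℕ) : ℕ :=
  {G : Finset (Fin n) | IsMinNonface Δ G ∧ G.card = k ∧
    (∃ v ∈ G, (v : ℕ) + 1 = ℓ + k - 1) ∧ ∀ u ∈ G, (u : ℕ) + 1 ≤ ℓ + k - 1}.ncard

/-- `μ_{ℓ,k}(Δ)` (written `muGen Δ k ℓ`), defined by the recursion
`m_{ℓ,k} = μ_{ℓ,k} − Σ_{q=1}^{ℓ} μ_{q,k−1}`. -/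
def muGen {n : ℕ} (Δ : Set (Finset (Fin n))) : ℕ → ℕ → ℤ
  | 0, ℓ => (mGen Δ ℓ 0 : ℤ)
  | (k+1), ℓ => (mGen Δ ℓ (k+1) : ℤ) + ∑ q ∈ Finset.Icc 1 ℓ, muGen Δ k q

/-- A lattice path from `(0,0)` to `(n-a, a)`, as a word in `{N, E}` of length `n`
with exactly `a` letters `N` (`true` = north). -/
def NPath (n a : ℕ) : Type :=
  {L : Fin n → Bool // (Finset.univ.filter (fun i => L i = true)).card = a}

/-- `ν(L)`: the set of positions of the north steps of `L`. -/
def nuP {n a : ℕ} (L : NPath n a) : Finset (Fin n) :=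
  Finset.univ.filter (fun i => L.1 i = true)

/-- The height of the path after step `p` (number of north steps at positions `≤ p`). -/
def heightAt {n a : ℕ} (L : NPath n a) (p : Fin n) : ℕ :=
  (Finset.univ.filter (fun i => i ≤ p ∧ L.1 i = true)).card

/-- `L ≤ L'` iff `L` never goes above `L'`. -/
def PathLe {n a : ℕ} (L L' : NPath n a) : Prop :=
  ∀ p : Fin n, heightAt L p ≤ heightAt L' p

/-- An order ideal of the poset `𝓛_{r,a}` of lattice paths. -/
def IsOrderIdealP {n a : ℕ} (Q : Set (NPath n a)) : Prop :=
  ∀ L ∈ Q, ∀ L', PathLe L' L → L' ∈ Q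

/-- The x-coordinate of the step of `L` at position `p`. -/
def xcoordP {n a : ℕ} (L : NPath n a) (p : Fin n) : ℕ :=
  (Finset.univ.filter (fun j => j < p ∧ L.1 j = false)).card

/-- `λ(L)`: the monomial `∏ w_i^{λ_i(L)}`, where `λ_i(L)` is the number of north steps
of `L` with x-coordinate `i - 1`. -/
def lamP (r : ℕ) {n a : ℕ} (L : NPath n a) : Fin n → ℕ :=
  fun i => if (i : ℕ) < r then
    (Finset.univ.filter (fun p => L.1 p = true ∧ xcoordP L p = (i : ℕ))).card
  else 0


namespace NoShiftedAux

lemma card_shiftset {α : Type*} [DecidableEq α] {F : Finset α} {r s : α}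
    (hr : r ∈ F) (hs : s ∉ F) : (insert s (F.erase r)).card = F.card := by
  have h1 : s ∉ F.erase r := fun h => hs (Finset.mem_of_mem_erase h)
  have h2 : 0 < F.card := Finset.card_pos.mpr ⟨r, hr⟩
  rw [Finset.card_insert_of_notMem h1, Finset.card_erase_of_mem hr]
  omega

lemma skel_card_self {n : ℕ} (Δ : Set (Finset (Fin n))) (i : ℕ) :
    {F ∈ pureSkel Δ i | F.card = i} = {F ∈ Δ | F.card = i} := by
  ext G
  constructor
  · rintro ⟨⟨F, hF, hFc, hGF⟩, hGc⟩
    have hEq : G = F := Finset.eq_of_subset_of_card_le hGF (by omega)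
    exact ⟨hEq ▸ hF, hGc⟩
  · rintro ⟨hG, hGc⟩
    exact ⟨⟨G, hG, hGc, Finset.Subset.refl G⟩, hGc⟩

lemma S1 : ∀ F : Finset (Fin 6), F.card = 4 → F ≠ {2,3,4,5} →
    ∃ r s : Fin 6, r < s ∧ r ∈ F ∧ s ∉ F ∧
    (({2,3,4,5} : Finset (Fin 6)) \ insert s (F.erase r)).card <
      (({2,3,4,5} : Finset (Fin 6)) \ F).card := by decide

lemma S2 : ∀ F : Finset (Fin 6), F.card = 4 → F ≠ {2,3,4,5} → F ≠ {1,3,4,5} →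
    ∃ r s : Fin 6, r < s ∧ r ∈ F ∧ s ∉ F ∧
    insert s (F.erase r) ≠ {2,3,4,5} ∧
    (({1,3,4,5} : Finset (Fin 6)) \ insert s (F.erase r)).card <
      (({1,3,4,5} : Finset (Fin 6)) \ F).card := by decide

lemma S3 : ∀ X : Finset (Fin 6), X.card = 4 → X ≠ {2,3,4,5} → X ≠ {1,3,4,5} →
    (∀ r s : Fin 6, r < s → r ∈ X → s ∉ X →
      insert s (X.erase r) ∈ ({{2,3,4,5},{1,3,4,5},X} : Finset (Finset (Fin 6)))) →
    X = {0,3,4,5} ∨ X = {1,2,4,5} := by decide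

/-- classification of shifted 3-element families of 4-subsets of `Fin 6` -/
lemma classify6 (Q : Set (Finset (Fin 6)))
    (hcard : ∀ F ∈ Q, F.card = 4)
    (hsh : ∀ F ∈ Q, ∀ r s : Fin 6, r < s → r ∈ F → s ∉ F → insert s (F.erase r) ∈ Q)
    (h3 : Q.ncard = 3) :
    Q = {({2,3,4,5} : Finset (Fin 6)), {1,3,4,5}, {0,3,4,5}} ∨
    Q = {({2,3,4,5} : Finset (Fin 6)), {1,3,4,5}, {1,2,4,5}} := by
  have hne : Q.Nonempty := by
    rcases Q.eq_empty_or_nonempty with h | h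
    · rw [h] at h3; simp at h3
    · exact h
  have hT0 : ({2,3,4,5} : Finset (Fin 6)) ∈ Q := by
    obtain ⟨F0, hF0⟩ := hne
    have key : ∀ k : ℕ, ∀ F ∈ Q, (({2,3,4,5} : Finset (Fin 6)) \ F).card ≤ k →
        ({2,3,4,5} : Finset (Fin 6)) ∈ Q := by
      intro k
      induction k with
      | zero =>
        intro F hF h0
        have hsub : ({2,3,4,5} : Finset (Fin 6)) ⊆ F := by
          intro x hx
          by_contra hx'
          have hm : x ∈ ({2,3,4,5} : Finset (Fin 6)) \ F := Finset.mem_sdiff.mpr ⟨hx, hx'⟩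
          have := Finset.card_pos.mpr ⟨x, hm⟩
          omega
        have hc4 : F.card = 4 := hcard F hF
        have : ({2,3,4,5} : Finset (Fin 6)) = F :=
          Finset.eq_of_subset_of_card_le hsub (by rw [hc4]; decide)
        exact this ▸ hF
      | succ k ih =>
        intro F hF hk
        by_cases hFT : F = {2,3,4,5}
        · exact hFT ▸ hF
        · obtain ⟨r, s, hrs, hrF, hsF, hlt⟩ := S1 F (hcard F hF) hFT
          exact ih _ (hsh F hF r s hrs hrF hsF) (by omega)
    exact key _ F0 hF0 le_rfl
  obtain ⟨F1, hF1Q, hF1ne⟩ : ∃ F ∈ Q, F ≠ ({2,3,4,5} : Finset (Fin 6)) := by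
    by_contra h
    push_neg at h
    have hsub : Q ⊆ {({2,3,4,5} : Finset (Fin 6))} := fun F hF => h F hF
    have := Set.ncard_le_ncard hsub (Set.finite_singleton _)
    rw [Set.ncard_singleton] at this
    omega
  have hA1 : ({1,3,4,5} : Finset (Fin 6)) ∈ Q := by
    have key : ∀ k : ℕ, ∀ F ∈ Q, F ≠ ({2,3,4,5} : Finset (Fin 6)) →
        (({1,3,4,5} : Finset (Fin 6)) \ F).card ≤ k →
        ({1,3,4,5} : Finset (Fin 6)) ∈ Q := by
      intro k
      induction k with
      | zero =>
        intro F hF hFT h0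
        have hsub : ({1,3,4,5} : Finset (Fin 6)) ⊆ F := by
          intro x hx
          by_contra hx'
          have hm : x ∈ ({1,3,4,5} : Finset (Fin 6)) \ F := Finset.mem_sdiff.mpr ⟨hx, hx'⟩
          have := Finset.card_pos.mpr ⟨x, hm⟩
          omega
        have hc4 : F.card = 4 := hcard F hF
        have : ({1,3,4,5} : Finset (Fin 6)) = F :=
          Finset.eq_of_subset_of_card_le hsub (by rw [hc4]; decide)
        exact this ▸ hF
      | succ k ih =>
        intro F hF hFT hk
        by_cases hFA : F = {1,3,4,5}
        · exact hFA ▸ hF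
        · obtain ⟨r, s, hrs, hrF, hsF, hne', hlt⟩ := S2 F (hcard F hF) hFT hFA
          exact ih _ (hsh F hF r s hrs hrF hsF) hne' (by omega)
    exact key _ F1 hF1Q hF1ne le_rfl
  obtain ⟨X, hXQ, hXT0, hXA1⟩ : ∃ X ∈ Q, X ≠ ({2,3,4,5} : Finset (Fin 6)) ∧
      X ≠ ({1,3,4,5} : Finset (Fin 6)) := by
    by_contra h
    push_neg at h
    have hsub : Q ⊆ {({2,3,4,5} : Finset (Fin 6)), ({1,3,4,5} : Finset (Fin 6))} := by
      intro F hF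
      by_cases h1 : F = ({2,3,4,5} : Finset (Fin 6))
      · exact Set.mem_insert_iff.mpr (Or.inl h1)
      · exact Set.mem_insert_iff.mpr (Or.inr (h F hF h1))
    have h2 := Set.ncard_le_ncard hsub (Set.toFinite _)
    have h4 : ({({2,3,4,5} : Finset (Fin 6)), ({1,3,4,5} : Finset (Fin 6))} :
        Set (Finset (Fin 6))).ncard ≤ 2 := by
      have := Set.ncard_insert_le ({2,3,4,5} : Finset (Fin 6))
        ({({1,3,4,5} : Finset (Fin 6))} : Set (Finset (Fin 6)))
      rw [Set.ncard_singleton] at this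
      omega
    omega
  have hQeq : Q = {({2,3,4,5} : Finset (Fin 6)), {1,3,4,5}, X} := by
    have hsub : ({({2,3,4,5} : Finset (Fin 6)), {1,3,4,5}, X} : Set (Finset (Fin 6))) ⊆ Q := by
      intro F hF
      rcases hF with h | h | h
      · exact h ▸ hT0
      · exact h ▸ hA1
      · exact h ▸ hXQ
    have hcard3 : ({({2,3,4,5} : Finset (Fin 6)), {1,3,4,5}, X} :
        Set (Finset (Fin 6))).ncard = 3 := by
      rw [Set.ncard_insert_of_notMem (by
            simp only [Set.mem_insert_iff, Set.mem_singleton_iff]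
            push_neg
            exact ⟨by decide, Ne.symm hXT0⟩),
          Set.ncard_insert_of_notMem (by
            simp only [Set.mem_singleton_iff]
            exact Ne.symm hXA1),
          Set.ncard_singleton]
    exact (Set.eq_of_subset_of_ncard_le hsub (by omega) (Set.toFinite _)).symm
  have hshX : ∀ r s : Fin 6, r < s → r ∈ X → s ∉ X →
      insert s (X.erase r) ∈ ({{2,3,4,5},{1,3,4,5},X} : Finset (Finset (Fin 6))) := by
    intro r s h1 h2 h3'
    have hm := hsh X hXQ r s h1 h2 h3'
    rw [hQeq] at hm
    rcases hm with h | h | h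
    · exact Finset.mem_insert.mpr (Or.inl h)
    · exact Finset.mem_insert.mpr (Or.inr (Finset.mem_insert.mpr (Or.inl h)))
    · exact Finset.mem_insert.mpr (Or.inr (Finset.mem_insert.mpr (Or.inr
        (Finset.mem_singleton.mpr h))))
  rcases S3 X (hcard X hXQ) hXT0 hXA1 hshX with h | h
  · left; rw [hQeq, h]
  · right; rw [hQeq, h]


/-- triangles not inside one of the case-A facets have two elements `≤ 2` -/
lemma D2 : ∀ T : Finset (Fin 6), T.card = 3 →
    ¬ T ⊆ {2,3,4,5} → ¬ T ⊆ {1,3,4,5} → ¬ T ⊆ {0,3,4,5} →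
    ∃ x ∈ T, ∃ y ∈ T, x < y ∧ (y : ℕ) ≤ 2 := by decide

def E12 : Finset (Finset (Fin 6)) :=
  (Finset.univ.powersetCard 2).filter (fun p => ∃ v ∈ p, 3 ≤ (v : ℕ))

lemma D3 : ∀ p ∈ E12, p.card = 2 ∧
    (p ⊆ {2,3,4,5} ∨ p ⊆ {1,3,4,5} ∨ p ⊆ {0,3,4,5}) := by decide

lemma E12card : E12.card = 12 := by decide

lemma Dxy : ∀ x y : Fin 6, x < y → (y : ℕ) ≤ 2 →
    ({x, y} : Finset (Fin 6)) ∉ E12 ∧ ({x, y} : Finset (Fin 6)).card = 2 := by decide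

lemma D4 : ({2,3,4,5} : Finset (Fin 6)) ⊆ {1,2,3,4,5} ∧
    ({1,3,4,5} : Finset (Fin 6)) ⊆ {1,2,3,4,5} ∧
    ({1,2,4,5} : Finset (Fin 6)) ⊆ {1,2,3,4,5} ∧
    ({1,2,3,4,5} : Finset (Fin 6)).card = 5 := by decide

end NoShiftedAux


/-- (Example 2.3) There is no shifted simplicial complex of dimension `3`
whose `h̃`-triangle has rows `(1), (1,5), (1,4,7), (1,3,3,4), (1,2,0,0,0)`. -/
theorem no_shifted_complex_with_given_htriangle :
    ¬ ∃ (n : ℕ) (Δ : Set (Finset (Fin n))), IsCplx Δ ∧ ShiftedCplx Δ ∧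
      (∀ F ∈ Δ, F.card ≤ 4) ∧ (∃ F ∈ Δ, F.card = 4) ∧
      htilde Δ 0 0 = 1 ∧
      htilde Δ 1 0 = 1 ∧ htilde Δ 1 1 = 5 ∧
      htilde Δ 2 0 = 1 ∧ htilde Δ 2 1 = 4 ∧ htilde Δ 2 2 = 7 ∧
      htilde Δ 3 0 = 1 ∧ htilde Δ 3 1 = 3 ∧ htilde Δ 3 2 = 3 ∧ htilde Δ 3 3 = 4 ∧
      htilde Δ 4 0 = 1 ∧ htilde Δ 4 1 = 2 ∧ htilde Δ 4 2 = 0 ∧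
      htilde Δ 4 3 = 0 ∧ htilde Δ 4 4 = 0 := by
  rintro ⟨n, Δ, hc, hs, hdim, hex, h00, h10, h11, h20, h21, h22, h30, h31, h32, h33,
    h40, h41, h42, h43, h44⟩
  clear h00 hdim
  open NoShiftedAux in
  -- extract f-vector information
  simp only [htilde, hvec, Finset.sum_range_succ, Finset.sum_range_zero]
    at h10 h11 h20 h21 h22 h30 h31 h32 h33 h40 h41 h42 h43 h44
  norm_num [Nat.choose] at h10 h11 h20 h21 h22 h30 h31 h32 h33 h40 h41 h42 h43 h44
  have hf11 : fvec (pureSkel Δ 1) 1 = 6 := by omega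
  have hf22 : fvec (pureSkel Δ 2) 2 = 12 := by omega
  have hf33 : fvec (pureSkel Δ 3) 3 = 11 := by omega
  have hf42 : fvec (pureSkel Δ 4) 2 = 12 := by omega
  have hf43 : fvec (pureSkel Δ 4) 3 = 10 := by omega
  have hf44 : fvec (pureSkel Δ 4) 4 = 3 := by omega
  clear h10 h11 h20 h21 h22 h30 h31 h32 h33 h40 h41 h42 h43 h44
  -- the vertex set
  set V : Set (Fin n) := {v | ({v} : Finset (Fin n)) ∈ Δ} with hVdef
  have hVcard : V.ncard = 6 := by
    have himg : {F ∈ pureSkel Δ 1 | F.card = 1} =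
        (fun v => ({v} : Finset (Fin n))) '' V := by
      rw [NoShiftedAux.skel_card_self]
      ext G
      constructor
      · rintro ⟨hG, hGc⟩
        obtain ⟨v, rfl⟩ := Finset.card_eq_one.mp hGc
        exact ⟨v, hG, rfl⟩
      · rintro ⟨v, hv, rfl⟩
        exact ⟨hv, Finset.card_singleton v⟩
    have := hf11
    rw [fvec, himg, Set.ncard_image_of_injective V Finset.singleton_injective] at this
    exact this
  have h6 : 6 ≤ n := by
    have h1 : V.ncard ≤ (Set.univ : Set (Fin n)).ncard :=
      Set.ncard_le_ncard (Set.subset_univ V) (Set.toFinite _)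
    rw [hVcard, Set.ncard_univ, Nat.card_eq_fintype_card, Fintype.card_fin] at h1
    exact h1
  -- the embedding of the top six vertices
  set e : Fin 6 ↪ Fin n := ⟨fun k => ⟨n - 6 + (k : ℕ), by have := k.isLt; omega⟩, by
    intro a b hab
    have hv : n - 6 + (a : ℕ) = n - 6 + (b : ℕ) := congrArg Fin.val hab
    exact Fin.ext (by omega)⟩ with hedef
  have he_val : ∀ k : Fin 6, ((e k : Fin n) : ℕ) = n - 6 + (k : ℕ) := fun k => rfl
  have he_mono : ∀ {a b : Fin 6}, a < b → e a < e b := by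
    intro a b hab
    have : (a : ℕ) < (b : ℕ) := hab
    show ((e a : Fin n) : ℕ) < ((e b : Fin n) : ℕ)
    rw [he_val, he_val]
    omega
  -- V is up-closed, hence equals the image of e
  have hup : ∀ v ∈ V, ∀ w : Fin n, v ≤ w → w ∈ V := by
    intro v hv w hvw
    rcases eq_or_lt_of_le hvw with rfl | hlt
    · exact hv
    · have hw : w ∉ ({v} : Finset (Fin n)) := by
        simp only [Finset.mem_singleton]
        exact (ne_of_gt hlt)
      have := hs {v} hv v w hlt (Finset.mem_singleton_self v) hw
      simpa [hVdef] using this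
  have hVsub : V ⊆ ↑(Finset.univ.map e) := by
    intro v hv
    have hvge : n - 6 ≤ (v : ℕ) := by
      by_contra hlt
      push_neg at hlt
      have hnm : v ∉ Finset.univ.map e := by
        simp only [Finset.mem_map, Finset.mem_univ, true_and]
        rintro ⟨k, rfl⟩
        rw [he_val] at hlt
        omega
      have hsub : ↑(insert v (Finset.univ.map e)) ⊆ V := by
        intro x hx
        simp only [Finset.coe_insert, Set.mem_insert_iff, Finset.coe_map,
          Finset.coe_univ, Set.image_univ, Set.mem_range] at hx
        rcases hx with rfl | ⟨k, rfl⟩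
        · exact hv
        · refine hup v hv (e k) ?_
          show (v : ℕ) ≤ ((e k : Fin n) : ℕ)
          rw [he_val]
          omega
      have hle := Set.ncard_le_ncard hsub (Set.toFinite _)
      rw [Set.ncard_coe_finset, Finset.card_insert_of_notMem hnm, Finset.card_map,
        Finset.card_univ, Fintype.card_fin, hVcard] at hle
      omega
    have : v ∈ Finset.univ.map e := by
      simp only [Finset.mem_map, Finset.mem_univ, true_and]
      refine ⟨⟨(v : ℕ) - (n - 6), by have := v.isLt; omega⟩, ?_⟩
      apply Fin.ext
      rw [he_val]
      simp only []
      omega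
    exact this
  -- every face is contained in the image of e
  have hface : ∀ F ∈ Δ, F ⊆ Finset.univ.map e := by
    intro F hF x hx
    have hxV : x ∈ V := hc F hF {x} (Finset.singleton_subset_iff.mpr hx)
    exact hVsub hxV
  have hpre : ∀ F : Finset (Fin n), F ⊆ Finset.univ.map e →
      (Finset.univ.filter (fun k => e k ∈ F)).map e = F := by
    intro F hF
    ext x
    simp only [Finset.mem_map, Finset.mem_filter, Finset.mem_univ, true_and]
    constructor
    · rintro ⟨k, hk, rfl⟩; exact hk
    · intro hx
      obtain ⟨k, -, rfl⟩ := Finset.mem_map.mp (hF hx)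
      exact ⟨k, hx, rfl⟩
  -- the family of 4-faces, transported to Fin 6
  set Q' : Set (Finset (Fin 6)) := {S | S.map e ∈ Δ ∧ S.card = 4} with hQ'def
  have hcard' : ∀ S ∈ Q', S.card = 4 := fun S hS => hS.2
  have hsh' : ∀ S ∈ Q', ∀ r s : Fin 6, r < s → r ∈ S → s ∉ S →
      insert s (S.erase r) ∈ Q' := by
    intro S hS r s hrs hr hns
    have hrm : e r ∈ S.map e := Finset.mem_map_of_mem e hr
    have hsm : e s ∉ S.map e := by
      intro h
      obtain ⟨k, hk, hek⟩ := Finset.mem_map.mp h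
      exact hns (e.injective hek ▸ hk)
    have h1 := hs (S.map e) hS.1 (e r) (e s) (he_mono hrs) hrm hsm
    have h2 : insert (e s) ((S.map e).erase (e r)) = (insert s (S.erase r)).map e := by
      rw [Finset.map_insert, Finset.map_erase]
    constructor
    · rw [← h2]; exact h1
    · rw [card_shiftset hr hns, hS.2]
  have hQ'3 : Q'.ncard = 3 := by
    have himg : {F ∈ Δ | F.card = 4} = (fun S : Finset (Fin 6) => S.map e) '' Q' := by
      ext F
      constructor
      · rintro ⟨hF, hFc⟩
        refine ⟨Finset.univ.filter (fun k => e k ∈ F), ⟨?_, ?_⟩, hpre F (hface F hF)⟩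
        · rw [hpre F (hface F hF)]; exact hF
        · have := hpre F (hface F hF)
          calc (Finset.univ.filter (fun k => e k ∈ F)).card
              = ((Finset.univ.filter (fun k => e k ∈ F)).map e).card :=
                (Finset.card_map e).symm
            _ = F.card := by rw [this]
            _ = 4 := hFc
      · rintro ⟨S, hS, rfl⟩
        exact ⟨hS.1, by rw [Finset.card_map]; exact hS.2⟩
    have h1 := hf44
    rw [fvec, skel_card_self, himg,
      Set.ncard_image_of_injective Q' (Finset.map_injective e)] at h1
    exact h1
  -- membership of a 4-face forces it to be one of the three facets in the classification
  have hmem4 : ∀ F ∈ Δ, F.card = 4 → Finset.univ.filter (fun k => e k ∈ F) ∈ Q' ∧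
      (Finset.univ.filter (fun k => e k ∈ F)).map e = F := by
    intro F hF hFc
    have hp := hpre F (hface F hF)
    refine ⟨⟨by rw [hp]; exact hF, ?_⟩, hp⟩
    have h2 := congrArg Finset.card hp
    rw [Finset.card_map] at h2
    omega
  rcases classify6 Q' hcard' hsh' hQ'3 with hQA | hQB
  · -- Case A : facets {2,3,4,5}, {1,3,4,5}, {0,3,4,5}
    have hfT0 : ({2,3,4,5} : Finset (Fin 6)) ∈ Q' := by
      rw [hQA]; exact Set.mem_insert _ _
    have hfA1 : ({1,3,4,5} : Finset (Fin 6)) ∈ Q' := by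
      rw [hQA]; exact Set.mem_insert_iff.mpr (Or.inr (Set.mem_insert _ _))
    have hfXA : ({0,3,4,5} : Finset (Fin 6)) ∈ Q' := by
      rw [hQA]
      exact Set.mem_insert_iff.mpr (Or.inr (Set.mem_insert_iff.mpr
        (Or.inr (Set.mem_singleton _))))
    -- there is a triangle of Δ not contained in a 4-face
    obtain ⟨T, hTmem, hTnot⟩ : ∃ T ∈ {F ∈ pureSkel Δ 3 | F.card = 3},
        T ∉ {F ∈ pureSkel Δ 4 | F.card = 3} := by
      by_contra h
      push_neg at h
      have hsub : {F ∈ pureSkel Δ 3 | F.card = 3} ⊆ {F ∈ pureSkel Δ 4 | F.card = 3} :=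
        fun x hx => h x hx
      have hle := Set.ncard_le_ncard hsub (Set.toFinite _)
      simp only [fvec] at hf33 hf43
      omega
    rw [skel_card_self Δ 3] at hTmem
    obtain ⟨hTΔ, hTc⟩ := hTmem
    have hT4 : ∀ F ∈ Δ, F.card = 4 → ¬ T ⊆ F := by
      intro F hF hFc hTF
      exact hTnot ⟨⟨F, hF, hFc, hTF⟩, hTc⟩
    have hTsub := hface T hTΔ
    have hTmap : (Finset.univ.filter (fun k => e k ∈ T)).map e = T := hpre T hTsub
    set T' := Finset.univ.filter (fun k => e k ∈ T) with hT'def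
    have hT'c : T'.card = 3 := by
      have h2 := congrArg Finset.card hTmap
      rw [Finset.card_map] at h2
      omega
    have hnsub : ∀ A : Finset (Fin 6), A ∈ Q' → ¬ T' ⊆ A := by
      intro A hA hTA
      refine hT4 (A.map e) hA.1 (by rw [Finset.card_map]; exact hA.2) ?_
      rw [← hTmap]
      exact Finset.map_subset_map.mpr hTA
    obtain ⟨x, hx, y, hy, hxy, hy2⟩ :=
      D2 T' hT'c (hnsub _ hfT0) (hnsub _ hfA1) (hnsub _ hfXA)
    have hxyE := Dxy x y hxy hy2
    have hcard13 : ((insert ({x,y} : Finset (Fin 6)) E12).image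
        (fun S : Finset (Fin 6) => S.map e)).card = 13 := by
      rw [Finset.card_image_of_injective _ (Finset.map_injective e),
        Finset.card_insert_of_notMem hxyE.1, E12card]
    have hsubE : ↑((insert ({x,y} : Finset (Fin 6)) E12).image
        (fun S : Finset (Fin 6) => S.map e)) ⊆ {F ∈ pureSkel Δ 2 | F.card = 2} := by
      intro G hG
      rw [Finset.mem_coe, Finset.mem_image] at hG
      obtain ⟨p, hp, rfl⟩ := hG
      rcases Finset.mem_insert.mp hp with rfl | hpE
      · have hsubT : ({x,y} : Finset (Fin 6)) ⊆ T' := by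
          intro z hz
          rcases Finset.mem_insert.mp hz with rfl | hz
          · exact hx
          · rw [Finset.mem_singleton.mp hz]; exact hy
        have hGT : (({x,y} : Finset (Fin 6))).map e ⊆ T := by
          rw [← hTmap]
          exact Finset.map_subset_map.mpr hsubT
        have hGΔ : (({x,y} : Finset (Fin 6))).map e ∈ Δ := hc T hTΔ _ hGT
        have hGc : ((({x,y} : Finset (Fin 6))).map e).card = 2 := by
          rw [Finset.card_map]; exact hxyE.2
        exact ⟨⟨_, hGΔ, hGc, Finset.Subset.refl _⟩, hGc⟩
      · obtain ⟨hpc, hsub3⟩ := D3 p hpE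
        have hGc : (p.map e).card = 2 := by rw [Finset.card_map]; exact hpc
        have hGΔ : p.map e ∈ Δ := by
          rcases hsub3 with h | h | h
          · exact hc _ hfT0.1 _ (Finset.map_subset_map.mpr h)
          · exact hc _ hfA1.1 _ (Finset.map_subset_map.mpr h)
          · exact hc _ hfXA.1 _ (Finset.map_subset_map.mpr h)
        exact ⟨⟨_, hGΔ, hGc, Finset.Subset.refl _⟩, hGc⟩
    have hle := Set.ncard_le_ncard hsubE (Set.toFinite _)
    rw [Set.ncard_coe_finset, hcard13] at hle
    simp only [fvec] at hf22
    omega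
  · -- Case B : facets {2,3,4,5}, {1,3,4,5}, {1,2,4,5}
    have hW : ∀ F ∈ Δ, F.card = 4 → F ⊆ ({1,2,3,4,5} : Finset (Fin 6)).map e := by
      intro F hF hFc
      obtain ⟨hQ'mem, hmap⟩ := hmem4 F hF hFc
      rw [hQB] at hQ'mem
      simp only [Set.mem_insert_iff, Set.mem_singleton_iff] at hQ'mem
      rcases hQ'mem with h | h | h
      all_goals
        rw [← hmap, h]
        exact Finset.map_subset_map.mpr (by decide)
    have hsub : {F ∈ pureSkel Δ 4 | F.card = 2} ⊆
        ↑(((({1,2,3,4,5} : Finset (Fin 6))).map e).powersetCard 2) := by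
      rintro G ⟨⟨F, hF, hFc, hGF⟩, hGc⟩
      rw [Finset.mem_coe, Finset.mem_powersetCard]
      exact ⟨hGF.trans (hW F hF hFc), hGc⟩
    have hle := Set.ncard_le_ncard hsub (Set.toFinite _)
    rw [Set.ncard_coe_finset, Finset.card_powersetCard, Finset.card_map] at hle
    simp only [fvec] at hf42
    have : (({1,2,3,4,5} : Finset (Fin 6))).card = 5 := by decide
    rw [this] at hle
    norm_num [Nat.choose] at hle
    omega
end
end

section
/- For positive integers r and a, the map Q ↦ λ(Q) := {λ(L) : L ∈ Q} is a bijection from the set of order ideals of the lattice-path poset L_{r,a} onto the set of shifted multicomplexes on W_r consisting of monomials of degree at most a. -/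
open Finset

noncomputable section

namespace LamBijAux

/-! ### Partial sums of exponent vectors, with natural-number index -/

def psumN {k : ℕ} (m : Fin k → ℕ) (j : ℕ) : ℕ :=
  ∑ t ∈ Finset.range j, if h : t < k then m ⟨t, h⟩ else 0

lemma psumN_zero {k : ℕ} (m : Fin k → ℕ) : psumN m 0 = 0 := rfl

lemma psumN_succ {k : ℕ} (m : Fin k → ℕ) {t : ℕ} (ht : t < k) :
    psumN m (t + 1) = psumN m t + m ⟨t, ht⟩ := by
  simp [psumN, Finset.sum_range_succ, ht]

lemma psumN_mono {k : ℕ} (m : Fin k → ℕ) : Monotone (psumN m) := fun i j hij =>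
  Finset.sum_le_sum_of_subset (Finset.range_subset_range.2 hij)

lemma psumN_eq_degM {k : ℕ} (m : Fin k → ℕ) {j : ℕ} (hj : k ≤ j) : psumN m j = degM m := by
  have h1 : psumN m k = psumN m j :=
    Finset.sum_subset (Finset.range_subset_range.2 hj)
      (fun x _ hx => dif_neg (by simpa using hx))
  rw [← h1]
  unfold psumN degM
  rw [← Fin.sum_univ_eq_sum_range (fun t => if h : t < k then m ⟨t, h⟩ else 0) k]
  exact Finset.sum_congr rfl (fun i _ => by simp)

lemma psumN_le_degM {k : ℕ} (m : Fin k → ℕ) (j : ℕ) : psumN m j ≤ degM m := by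
  calc psumN m j ≤ psumN m (j + k) := psumN_mono m (Nat.le_add_right _ _)
  _ = degM m := psumN_eq_degM m (Nat.le_add_left _ _)

lemma psumN_eq_degM_of_supported {k r : ℕ} (m : Fin k → ℕ) (hm : SupportedOn r m)
    {j : ℕ} (hj : r ≤ j) : psumN m j = degM m := by
  rcases le_total k j with h | h
  · exact psumN_eq_degM m h
  · rw [← psumN_eq_degM m (le_refl k)]
    apply Finset.sum_subset (Finset.range_subset_range.2 h)
    intro x _ hx
    simp only [Finset.mem_range, not_lt] at hx
    split_ifs with hxk
    · exact hm ⟨x, hxk⟩ (le_trans hj hx)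
    · rfl

lemma psumN_le_of_le {k : ℕ} {m m' : Fin k → ℕ} (h : ∀ i, m' i ≤ m i) (j : ℕ) :
    psumN m' j ≤ psumN m j := by
  apply Finset.sum_le_sum
  intro t _
  split_ifs with ht
  · exact h _
  · exact le_refl 0

lemma degM_le_of_le {k : ℕ} {m m' : Fin k → ℕ} (h : ∀ i, m' i ≤ m i) :
    degM m' ≤ degM m :=
  Finset.sum_le_sum (fun i _ => h i)

lemma eq_of_psumN_eq {k r : ℕ} (hrk : r ≤ k) (m m' : Fin k → ℕ)
    (hm : SupportedOn r m) (hm' : SupportedOn r m')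
    (h : ∀ j ≤ r, psumN m j = psumN m' j) : m = m' := by
  funext i
  by_cases hi : (i : ℕ) < r
  · have e1 := h i.val (le_of_lt hi)
    have e2 := h ((i : ℕ) + 1) (by omega)
    have s1 := psumN_succ m i.2
    have s2 := psumN_succ m' i.2
    simp only [Fin.eta] at s1 s2
    omega
  · rw [hm i (by omega), hm' i (by omega)]

/-! ### East steps of a lattice path -/

variable {r a : ℕ}

def eastSet (L : NPath (r + a) a) : Finset (Fin (r + a)) :=
  Finset.univ.filter (fun i => L.1 i = false)

lemma card_eastSet (L : NPath (r + a) a) : (eastSet L).card = r := by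
  have h2 := L.2
  have hc : eastSet L = (Finset.univ.filter (fun i => L.1 i = true))ᶜ := by
    ext i
    simp [eastSet]
  rw [hc, Finset.card_compl, h2, Fintype.card_fin]
  omega

noncomputable def Epos (L : NPath (r + a) a) : Fin r ↪o Fin (r + a) :=
  (eastSet L).orderEmbOfFin (card_eastSet L)

lemma Epos_mem (L : NPath (r + a) a) (j : Fin r) : Epos L j ∈ eastSet L :=
  Finset.orderEmbOfFin_mem _ _ _

lemma eastSet_eq_image (L : NPath (r + a) a) :
    eastSet L = Finset.univ.image (fun j => Epos L j) := by
  apply (Finset.eq_of_subset_of_card_le ?_ ?_).symm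
  · intro x hx
    rcases Finset.mem_image.1 hx with ⟨j, _, rfl⟩
    exact Epos_mem L j
  · rw [Finset.card_image_of_injective _ (Epos L).injective, card_eastSet,
      Finset.card_univ, Fintype.card_fin]

def cnt (L : NPath (r + a) a) (q : ℕ) : ℕ :=
  ((eastSet L).filter (fun t : Fin (r + a) => (t : ℕ) < q)).card

lemma cnt_eq (L : NPath (r + a) a) (q : ℕ) :
    cnt L q = (Finset.univ.filter (fun j : Fin r => ((Epos L j : Fin (r + a)) : ℕ) < q)).card := by
  unfold cnt
  rw [eastSet_eq_image, Finset.filter_image,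
    Finset.card_image_of_injective _ (Epos L).injective]

lemma cnt_le_r (L : NPath (r + a) a) (q : ℕ) : cnt L q ≤ r := by
  unfold cnt
  exact le_trans (Finset.card_filter_le _ _) (le_of_eq (card_eastSet L))

lemma cnt_zero (L : NPath (r + a) a) : cnt L 0 = 0 := by
  simp [cnt]

lemma cnt_mono (L : NPath (r + a) a) : Monotone (cnt L) := by
  intro i j hij
  unfold cnt
  apply Finset.card_le_card
  apply Finset.monotone_filter_right
  intro t ht
  omega

lemma cnt_top (L : NPath (r + a) a) {q : ℕ} (h : r + a ≤ q) : cnt L q = r := by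
  unfold cnt
  rw [Finset.filter_true_of_mem (fun t _ => lt_of_lt_of_le t.2 h), card_eastSet]

lemma Epos_lt_iff (L : NPath (r + a) a) (j : Fin r) (q : ℕ) :
    ((Epos L j : Fin (r + a)) : ℕ) < q ↔ (j : ℕ) + 1 ≤ cnt L q := by
  rw [cnt_eq]
  constructor
  · intro h
    have hsub : Finset.Iic j ⊆
        Finset.univ.filter (fun i => ((Epos L i : Fin (r + a)) : ℕ) < q) := by
      intro i hi
      simp only [Finset.mem_Iic] at hi
      simp only [Finset.mem_filter, Finset.mem_univ, true_and]
      have hle : (Epos L i : Fin (r + a)) ≤ Epos L j := (Epos L).monotone hi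
      have : ((Epos L i : Fin (r + a)) : ℕ) ≤ ((Epos L j : Fin (r + a)) : ℕ) := hle
      omega
    calc (j : ℕ) + 1 = (Finset.Iic j).card := (Fin.card_Iic j).symm
    _ ≤ _ := Finset.card_le_card hsub
  · intro h
    by_contra hq
    push_neg at hq
    have hsub : Finset.univ.filter (fun i => ((Epos L i : Fin (r + a)) : ℕ) < q) ⊆
        Finset.Iio j := by
      intro i hi
      simp only [Finset.mem_filter, Finset.mem_univ, true_and] at hi
      simp only [Finset.mem_Iio]
      by_contra hij
      push_neg at hij
      have hle : (Epos L j : Fin (r + a)) ≤ Epos L i := (Epos L).monotone hij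
      have : ((Epos L j : Fin (r + a)) : ℕ) ≤ ((Epos L i : Fin (r + a)) : ℕ) := hle
      omega
    have hcard := Finset.card_le_card hsub
    rw [Fin.card_Iio] at hcard
    omega

lemma heightAt_add_cnt (L : NPath (r + a) a) (p : Fin (r + a)) :
    heightAt L p + cnt L ((p : ℕ) + 1) = (p : ℕ) + 1 := by
  have h1 : cnt L ((p : ℕ) + 1) =
      (Finset.univ.filter (fun i : Fin (r + a) => i ≤ p ∧ L.1 i = false)).card := by
    unfold cnt eastSet
    rw [Finset.filter_filter]
    congr 1
    apply Finset.filter_congr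
    intro i _
    simp only [Fin.le_def]
    constructor
    · rintro ⟨h, h'⟩; exact ⟨by omega, h⟩
    · rintro ⟨h, h'⟩; exact ⟨h', by omega⟩
  have hunion : (Finset.univ.filter (fun i : Fin (r + a) => i ≤ p ∧ L.1 i = true)) ∪
      (Finset.univ.filter (fun i : Fin (r + a) => i ≤ p ∧ L.1 i = false)) = Finset.Iic p := by
    ext i
    simp only [Finset.mem_union, Finset.mem_filter, Finset.mem_univ, true_and, Finset.mem_Iic]
    constructor
    · rintro (⟨h, _⟩ | ⟨h, _⟩) <;> exact h
    · intro h
      cases hb : L.1 i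
      · exact Or.inr ⟨h, rfl⟩
      · exact Or.inl ⟨h, rfl⟩
  have hdisj : Disjoint (Finset.univ.filter (fun i : Fin (r + a) => i ≤ p ∧ L.1 i = true))
      (Finset.univ.filter (fun i : Fin (r + a) => i ≤ p ∧ L.1 i = false)) := by
    rw [Finset.disjoint_left]
    intro x hx hx'
    simp only [Finset.mem_filter, Finset.mem_univ, true_and] at hx hx'
    rw [hx.2] at hx'
    exact absurd hx'.2 (by simp)
  have hcard := Finset.card_union_of_disjoint hdisj
  rw [hunion, Fin.card_Iic] at hcard
  rw [heightAt, h1]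
  omega

lemma xcoordP_eq_cnt (L : NPath (r + a) a) (p : Fin (r + a)) :
    xcoordP L p = cnt L (p : ℕ) := by
  unfold xcoordP cnt eastSet
  rw [Finset.filter_filter]
  congr 1
  apply Finset.filter_congr
  intro i _
  simp only [Fin.lt_def]
  tauto

/-! ### The partial sums of `λ(L)` in terms of east positions -/

lemma supportedOn_lamP (L : NPath (r + a) a) : SupportedOn r (lamP r L) := by
  intro i hi
  show (if (i : ℕ) < r then _ else 0) = 0
  rw [if_neg (by omega)]

lemma psumN_lamP (L : NPath (r + a) a) {j : ℕ} (hj1 : 1 ≤ j) (hjr : j ≤ r) :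
    psumN (lamP r L) j + j = ((Epos L ⟨j - 1, by omega⟩ : Fin (r + a)) : ℕ) + 1 := by
  set q : Fin (r + a) := Epos L ⟨j - 1, by omega⟩ with hq
  -- Step 1: the partial sum counts north steps of small x-coordinate
  have hcard : psumN (lamP r L) j =
      (Finset.univ.filter (fun p : Fin (r + a) => L.1 p = true ∧ xcoordP L p < j)).card := by
    rw [Finset.card_eq_sum_card_fiberwise (f := fun p => xcoordP L p) (t := Finset.range j)
      (fun x hx => by
        simp only [Finset.mem_coe, Finset.mem_filter, Finset.mem_univ, true_and] at hx
        exact Finset.mem_range.2 hx.2)]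
    unfold psumN
    apply Finset.sum_congr rfl
    intro t ht
    have htj : t < j := Finset.mem_range.mp ht
    have htk : t < r + a := by omega
    have htr : t < r := by omega
    rw [dif_pos htk]
    show (if ((⟨t, htk⟩ : Fin (r + a)) : ℕ) < r then
      (Finset.univ.filter (fun p => L.1 p = true ∧ xcoordP L p = ((⟨t, htk⟩ : Fin (r + a)) : ℕ))).card
      else 0) = _
    rw [if_pos htr]
    congr 1
    ext p
    simp only [Finset.mem_filter, Finset.mem_univ, true_and]
    constructor
    · rintro ⟨hn, hx⟩
      exact ⟨⟨hn, by omega⟩, hx⟩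
    · rintro ⟨⟨hn, _⟩, hx⟩
      exact ⟨hn, hx⟩
  -- Step 2: small x-coordinate means position at most `q`
  have hx : ∀ p : Fin (r + a), (xcoordP L p < j ↔ p ≤ q) := by
    intro p
    rw [xcoordP_eq_cnt]
    constructor
    · intro h
      by_contra hpq
      push_neg at hpq
      have hlt : ((q : Fin (r + a)) : ℕ) < (p : ℕ) := hpq
      have h2 := (Epos_lt_iff L ⟨j - 1, by omega⟩ (p : ℕ)).1 hlt
      simp only at h2
      omega
    · intro h
      have hple : (p : ℕ) ≤ (q : ℕ) := h
      have h1 := cnt_mono L hple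
      have h2 : ¬ ((j - 1 : ℕ) + 1 ≤ cnt L (q : ℕ)) := by
        rw [← Epos_lt_iff L ⟨j - 1, by omega⟩ (q : ℕ)]
        simp [hq]
      omega
  have hSq : (Finset.univ.filter (fun p : Fin (r + a) => L.1 p = true ∧ xcoordP L p < j)) =
      Finset.univ.filter (fun p => p ≤ q ∧ L.1 p = true) := by
    ext p
    simp only [Finset.mem_filter, Finset.mem_univ, true_and]
    rw [hx p]
    tauto
  -- Step 3
  have hh := heightAt_add_cnt L q
  have hcq : cnt L ((q : ℕ) + 1) = j := by
    have hge := (Epos_lt_iff L ⟨j - 1, by omega⟩ ((q : ℕ) + 1)).1 (Nat.lt_succ_self _)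
    simp only at hge
    have hle : cnt L ((q : ℕ) + 1) ≤ j := by
      rcases Nat.lt_or_ge j r with hjr' | hjr'
      · by_contra hgt
        push_neg at hgt
        have h3 := (Epos_lt_iff L ⟨j, hjr'⟩ ((q : ℕ) + 1)).2 (by simpa using hgt)
        have hmono := (Epos L).strictMono
          (show (⟨j - 1, by omega⟩ : Fin r) < ⟨j, hjr'⟩ by
            rw [Fin.lt_def]; simp; omega)
        have h4 : ((q : Fin (r + a)) : ℕ) < ((Epos L ⟨j, hjr'⟩ : Fin (r + a)) : ℕ) := hmono
        omega
      · have := cnt_le_r L ((q : ℕ) + 1)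
        omega
    omega
  rw [hcard, hSq]
  have hht : (Finset.univ.filter (fun p : Fin (r + a) => p ≤ q ∧ L.1 p = true)).card =
      heightAt L q := rfl
  rw [hht]
  omega

lemma degM_lamP_le (hr : 0 < r) (L : NPath (r + a) a) : degM (lamP r L) ≤ a := by
  have h := psumN_lamP L (j := r) hr le_rfl
  have hdeg : psumN (lamP r L) r = degM (lamP r L) :=
    psumN_eq_degM_of_supported _ (supportedOn_lamP L) le_rfl
  have hE : ((Epos L ⟨r - 1, by omega⟩ : Fin (r + a)) : ℕ) < r + a := Fin.is_lt _
  omega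

lemma lamP_injective (hr : 0 < r) {L L' : NPath (r + a) a}
    (h : lamP r L = lamP r L') : L = L' := by
  have hE : ∀ j : Fin r, ((Epos L j : Fin (r + a)) : ℕ) = ((Epos L' j : Fin (r + a)) : ℕ) := by
    intro j
    have hjr : (j : ℕ) + 1 ≤ r := j.2
    have h1 := psumN_lamP L (j := (j : ℕ) + 1) (by omega) hjr
    have h2 := psumN_lamP L' (j := (j : ℕ) + 1) (by omega) hjr
    rw [h] at h1
    have he : (⟨(j : ℕ) + 1 - 1, by omega⟩ : Fin r) = j := Fin.ext (by simp)
    rw [he] at h1 h2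
    omega
  have hset : eastSet L = eastSet L' := by
    rw [eastSet_eq_image, eastSet_eq_image]
    have hfe : (fun j : Fin r => (Epos L j : Fin (r + a))) = fun j => Epos L' j :=
      funext fun j => Fin.ext (hE j)
    rw [hfe]
  apply Subtype.ext
  funext i
  have hm : i ∈ eastSet L ↔ i ∈ eastSet L' := by rw [hset]
  simp only [eastSet, Finset.mem_filter, Finset.mem_univ, true_and] at hm
  cases h1 : L.1 i <;> cases h2 : L'.1 i <;> simp_all

/-! ### Path order in terms of partial sums -/

lemma pathLe_iff_cnt (L' L : NPath (r + a) a) :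
    PathLe L' L ↔ ∀ q : ℕ, cnt L q ≤ cnt L' q := by
  constructor
  · intro hle q
    rcases Nat.eq_zero_or_pos q with rfl | hq
    · rw [cnt_zero, cnt_zero]
    rcases Nat.lt_or_ge (q - 1) (r + a) with hq2 | hq2
    · set p : Fin (r + a) := ⟨q - 1, hq2⟩ with hp
      have h1 := heightAt_add_cnt L p
      have h2 := heightAt_add_cnt L' p
      have h3 := hle p
      have hpe : ((p : Fin (r + a)) : ℕ) + 1 = q := by simp [hp]; omega
      rw [hpe] at h1 h2
      omega
    · rw [cnt_top L (by omega), cnt_top L' (by omega)]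
  · intro h p
    have h1 := heightAt_add_cnt L p
    have h2 := heightAt_add_cnt L' p
    have h3 := h ((p : ℕ) + 1)
    omega

lemma pathLe_iff_Epos (L' L : NPath (r + a) a) :
    PathLe L' L ↔ ∀ j : Fin r, ((Epos L' j : Fin (r + a)) : ℕ) ≤ ((Epos L j : Fin (r + a)) : ℕ) := by
  rw [pathLe_iff_cnt]
  constructor
  · intro h j
    have h1 := (Epos_lt_iff L j (((Epos L j : Fin (r + a)) : ℕ) + 1)).1 (Nat.lt_succ_self _)
    have h2 := h (((Epos L j : Fin (r + a)) : ℕ) + 1)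
    have h3 := (Epos_lt_iff L' j (((Epos L j : Fin (r + a)) : ℕ) + 1)).2 (le_trans h1 h2)
    omega
  · intro h q
    rw [cnt_eq, cnt_eq]
    apply Finset.card_le_card
    intro i hi
    simp only [Finset.mem_filter, Finset.mem_univ, true_and] at hi ⊢
    exact lt_of_le_of_lt (h i) hi

lemma pathLe_iff_psum (hr : 0 < r) (L' L : NPath (r + a) a) :
    PathLe L' L ↔ ∀ j ≤ r, psumN (lamP r L') j ≤ psumN (lamP r L) j := by
  rw [pathLe_iff_Epos]
  constructor
  · intro h j hj
    rcases Nat.eq_zero_or_pos j with rfl | hj1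
    · exact le_refl _
    have h1 := psumN_lamP L' hj1 hj
    have h2 := psumN_lamP L hj1 hj
    have h3 := h ⟨j - 1, by omega⟩
    omega
  · intro h j
    have hjr : (j : ℕ) + 1 ≤ r := j.2
    have h1 := psumN_lamP L' (j := (j : ℕ) + 1) (by omega) hjr
    have h2 := psumN_lamP L (j := (j : ℕ) + 1) (by omega) hjr
    have h3 := h ((j : ℕ) + 1) hjr
    have he : (⟨(j : ℕ) + 1 - 1, by omega⟩ : Fin r) = j := Fin.ext (by simp)
    rw [he] at h1 h2
    omega

/-! ### The path associated to a monomial -/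

def eVal (m : Fin (r + a) → ℕ) (i : Fin r) : ℕ := psumN m ((i : ℕ) + 1) + (i : ℕ)

lemma eVal_lt {m : Fin (r + a) → ℕ} (hdeg : degM m ≤ a) (i : Fin r) : eVal m i < r + a := by
  have h1 : psumN m ((i : ℕ) + 1) ≤ degM m := psumN_le_degM m _
  have h2 := i.2
  unfold eVal
  omega

lemma eVal_strictMono (m : Fin (r + a) → ℕ) : StrictMono (eVal m) := by
  intro i i' hii
  have h1 : psumN m ((i : ℕ) + 1) ≤ psumN m ((i' : ℕ) + 1) := psumN_mono m (by
    have : (i : ℕ) < (i' : ℕ) := hii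
    omega)
  have h2 : (i : ℕ) < (i' : ℕ) := hii
  unfold eVal
  omega

def pathB (m : Fin (r + a) → ℕ) : Fin (r + a) → Bool :=
  fun p => decide (∀ i : Fin r, (p : ℕ) ≠ eVal m i)

lemma pathB_false_iff (m : Fin (r + a) → ℕ) (p : Fin (r + a)) :
    pathB m p = false ↔ ∃ i : Fin r, (p : ℕ) = eVal m i := by
  simp [pathB]

lemma eastFilter_pathB {m : Fin (r + a) → ℕ} (hdeg : degM m ≤ a) :
    (Finset.univ.filter (fun p : Fin (r + a) => pathB m p = false)) =
      Finset.univ.image (fun i : Fin r => (⟨eVal m i, eVal_lt hdeg i⟩ : Fin (r + a))) := by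
  ext p
  simp only [Finset.mem_filter, Finset.mem_univ, true_and, Finset.mem_image, pathB_false_iff]
  constructor
  · rintro ⟨i, hi⟩
    exact ⟨i, Fin.ext hi.symm⟩
  · rintro ⟨i, hi⟩
    exact ⟨i, by rw [← hi]⟩

lemma card_pathB {m : Fin (r + a) → ℕ} (hdeg : degM m ≤ a) :
    (Finset.univ.filter (fun p : Fin (r + a) => pathB m p = true)).card = a := by
  have hinj : Function.Injective (fun i : Fin r => (⟨eVal m i, eVal_lt hdeg i⟩ : Fin (r + a))) := by
    intro i i' h
    have h' : eVal m i = eVal m i' := by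
      have := Fin.ext_iff.1 h
      simpa using this
    exact (eVal_strictMono m).injective h'
  have hcards : (Finset.univ.filter (fun p : Fin (r + a) => pathB m p = false)).card = r := by
    rw [eastFilter_pathB hdeg, Finset.card_image_of_injective _ hinj,
      Finset.card_univ, Fintype.card_fin]
  have hcompl : (Finset.univ.filter (fun p : Fin (r + a) => pathB m p = true)) =
      (Finset.univ.filter (fun p : Fin (r + a) => pathB m p = false))ᶜ := by
    ext p
    simp
  rw [hcompl, Finset.card_compl, hcards, Fintype.card_fin]
  omega

def pathOf (m : Fin (r + a) → ℕ) (hdeg : degM m ≤ a) : NPath (r + a) a :=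
  ⟨pathB m, card_pathB hdeg⟩

lemma Epos_pathOf {m : Fin (r + a) → ℕ} (hdeg : degM m ≤ a) (j : Fin r) :
    ((Epos (pathOf m hdeg) j : Fin (r + a)) : ℕ) = eVal m j := by
  set f : Fin r → Fin (r + a) := fun i => ⟨eVal m i, eVal_lt hdeg i⟩ with hf
  have hmem : ∀ x, f x ∈ eastSet (pathOf m hdeg) := by
    intro x
    have : eastSet (pathOf m hdeg) =
        Finset.univ.image (fun i : Fin r => (⟨eVal m i, eVal_lt hdeg i⟩ : Fin (r + a))) :=
      eastFilter_pathB hdeg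
    rw [this]
    exact Finset.mem_image.2 ⟨x, Finset.mem_univ x, rfl⟩
  have hmono : StrictMono f := by
    intro i i' h
    have := eVal_strictMono m h
    exact this
  have huniq := Finset.orderEmbOfFin_unique (card_eastSet (pathOf m hdeg)) hmem hmono
  have : Epos (pathOf m hdeg) j = f j := (congrFun huniq j).symm
  rw [this]

lemma lamP_pathOf (m : Fin (r + a) → ℕ) (hsupp : SupportedOn r m) (hdeg : degM m ≤ a) :
    lamP r (pathOf m hdeg) = m := by
  apply eq_of_psumN_eq (Nat.le_add_right r a) _ _ (supportedOn_lamP _) hsupp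
  intro j hj
  rcases Nat.eq_zero_or_pos j with rfl | hj1
  · rfl
  have h := psumN_lamP (pathOf m hdeg) hj1 hj
  rw [Epos_pathOf hdeg] at h
  have he : ((⟨j - 1, by omega⟩ : Fin r) : ℕ) = j - 1 := rfl
  unfold eVal at h
  rw [he] at h
  have hjj : j - 1 + 1 = j := by omega
  rw [hjj] at h
  omega

/-! ### Partial sums under shift moves -/

lemma psumN_shiftMove {k : ℕ} (m : Fin k → ℕ) (i j : Fin k) (hij : i ≤ j) (hmi : 0 < m i)
    (T : ℕ) : psumN (shiftMove m i j) T + (if (i : ℕ) < T then 1 else 0) =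
      psumN m T + (if (j : ℕ) < T ∧ i ≠ j then 1 else 0) := by
  have hi1 : (if (i : ℕ) < T then 1 else 0) =
      ∑ t ∈ Finset.range T, if t = (i : ℕ) then 1 else 0 := by
    rw [Finset.sum_ite_eq' (Finset.range T) ((i : ℕ)) (fun _ => 1)]
    simp [Finset.mem_range]
  have hj1 : (if (j : ℕ) < T ∧ i ≠ j then 1 else 0) =
      ∑ t ∈ Finset.range T, if t = (j : ℕ) ∧ i ≠ j then 1 else 0 := by
    by_cases hij' : i = j
    · simp [hij']
    · simp only [ne_eq, hij', not_false_eq_true, and_true]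
      rw [Finset.sum_ite_eq' (Finset.range T) ((j : ℕ)) (fun _ => 1)]
      simp [Finset.mem_range]
  rw [hi1, hj1]
  unfold psumN
  rw [← Finset.sum_add_distrib, ← Finset.sum_add_distrib]
  apply Finset.sum_congr rfl
  intro t ht
  have hijv : (i : ℕ) ≤ (j : ℕ) := hij
  by_cases htk : t < k
  · rw [dif_pos htk, dif_pos htk]
    show (if (⟨t, htk⟩ : Fin k) = i then m i - 1 else if (⟨t, htk⟩ : Fin k) = j then m j + 1
      else m ⟨t, htk⟩) + _ = _
    by_cases h1 : t = (i : ℕ)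
    · have hf1 : (⟨t, htk⟩ : Fin k) = i := Fin.ext h1
      rw [if_pos hf1, if_pos h1,
        if_neg (show ¬(t = (j : ℕ) ∧ i ≠ j) by rintro ⟨hh1, hh2⟩; exact hh2 (Fin.ext (by omega)))]
      rw [hf1]
      omega
    · have hf1 : (⟨t, htk⟩ : Fin k) ≠ i := fun hh => h1 (congrArg Fin.val hh)
      rw [if_neg hf1, if_neg h1]
      by_cases h2 : t = (j : ℕ)
      · have hf2 : (⟨t, htk⟩ : Fin k) = j := Fin.ext h2
        have hne : i ≠ j := fun hh => h1 (by rw [hh]; exact h2)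
        rw [if_pos hf2, if_pos (show t = (j : ℕ) ∧ i ≠ j from ⟨h2, hne⟩), hf2]
      · have hf2 : (⟨t, htk⟩ : Fin k) ≠ j := fun hh => h2 (congrArg Fin.val hh)
        rw [if_neg hf2, if_neg (show ¬(t = (j : ℕ) ∧ i ≠ j) by rintro ⟨hh1, _⟩; exact h2 hh1)]
  · rw [dif_neg htk, dif_neg htk]
    have h1 : ¬ t = (i : ℕ) := by have := i.2; omega
    have h2 : ¬ (t = (j : ℕ) ∧ i ≠ j) := by
      rintro ⟨hh, _⟩
      have := j.2
      omega
    rw [if_neg h1, if_neg h2]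

lemma psumN_shiftMove_le {k : ℕ} (m : Fin k → ℕ) (i j : Fin k) (hij : i ≤ j) (hmi : 0 < m i)
    (T : ℕ) : psumN (shiftMove m i j) T ≤ psumN m T := by
  have h := psumN_shiftMove m i j hij hmi T
  have hijv : (i : ℕ) ≤ (j : ℕ) := hij
  split_ifs at h <;> omega

lemma degM_shiftMove_le {k : ℕ} (m : Fin k → ℕ) (i j : Fin k) (hij : i ≤ j) (hmi : 0 < m i) :
    degM (shiftMove m i j) ≤ degM m := by
  have h := psumN_shiftMove m i j hij hmi k
  rw [psumN_eq_degM _ (le_refl k), psumN_eq_degM _ (le_refl k)] at h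
  have := i.2
  have := j.2
  split_ifs at h <;> omega

lemma supportedOn_shiftMove {k r : ℕ} (m : Fin k → ℕ) {i j : Fin k}
    (hi : (i : ℕ) < r) (hj : (j : ℕ) < r) (hm : SupportedOn r m) :
    SupportedOn r (shiftMove m i j) := by
  intro t ht
  have h1 : t ≠ i := fun hh => by rw [hh] at ht; omega
  have h2 : t ≠ j := fun hh => by rw [hh] at ht; omega
  show (if t = i then _ else if t = j then _ else m t) = 0
  rw [if_neg h1, if_neg h2]
  exact hm t ht

lemma shiftMove_self_le {k : ℕ} (m : Fin k → ℕ) (i : Fin k) (t : Fin k) :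
    shiftMove m i i t ≤ m t := by
  show (if t = i then m i - 1 else if t = i then m i + 1 else m t) ≤ m t
  split_ifs with h1
  · rw [h1]; exact Nat.sub_le _ _
  · exact le_refl _

/-! ### Dominated monomials belong to shifted multicomplexes -/

lemma dom_mem {r a : ℕ} (M : Set (Fin (r + a) → ℕ)) (hMc : IsMulticx M) (hMs : ShiftedMC r M) :
    ∀ N : ℕ, ∀ m ∈ M, SupportedOn r m → ∀ m' : Fin (r + a) → ℕ, SupportedOn r m' →
      (∀ j ≤ r, psumN m' j ≤ psumN m j) →
      (∑ j ∈ Finset.range (r + 1), (psumN m j - psumN m' j)) ≤ N → m' ∈ M := by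
  intro N
  induction N with
  | zero =>
    intro m hm hsm m' hsm' hdom hsum
    have hmm : m = m' := by
      apply eq_of_psumN_eq (Nat.le_add_right r a) _ _ hsm hsm'
      intro j hj
      have h0 : psumN m j - psumN m' j = 0 := by
        by_contra h0
        have hpos : 0 < psumN m j - psumN m' j := Nat.pos_of_ne_zero h0
        have hmem : j ∈ Finset.range (r + 1) := Finset.mem_range.2 (by omega)
        have hone : psumN m j - psumN m' j ≤
            ∑ j ∈ Finset.range (r + 1), (psumN m j - psumN m' j) :=
          Finset.single_le_sum (f := fun j => psumN m j - psumN m' j)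
            (fun _ _ => Nat.zero_le _) hmem
        omega
      have := hdom j hj
      omega
    rwa [← hmm]
  | succ N ih =>
    intro m hm hsm m' hsm' hdom hsum
    by_cases hall : ∀ j ≤ r, psumN m j = psumN m' j
    · have hmm : m = m' := eq_of_psumN_eq (Nat.le_add_right r a) _ _ hsm hsm' hall
      rwa [← hmm]
    · push_neg at hall
      obtain ⟨j1, hj1r, hj1ne⟩ := hall
      have hP : ∃ j, j ≤ r ∧ psumN m' j < psumN m j :=
        ⟨j1, hj1r, lt_of_le_of_ne (hdom j1 hj1r) (Ne.symm hj1ne)⟩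
      classical
      obtain ⟨j0, hj0r, hj0lt, hj0min⟩ :
          ∃ j0, j0 ≤ r ∧ psumN m' j0 < psumN m j0 ∧
            ∀ j < j0, ¬(j ≤ r ∧ psumN m' j < psumN m j) :=
        ⟨Nat.find hP, (Nat.find_spec hP).1, (Nat.find_spec hP).2,
          fun j hj => Nat.find_min hP hj⟩
      have hj0pos : 1 ≤ j0 := by
        rcases Nat.eq_zero_or_pos j0 with h0 | h0
        · exfalso
          rw [h0, psumN_zero, psumN_zero] at hj0lt
          omega
        · exact h0
      have hprev : psumN m' (j0 - 1) = psumN m (j0 - 1) := by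
        have h1 := hj0min (j0 - 1) (by omega)
        have h1' : ¬ psumN m' (j0 - 1) < psumN m (j0 - 1) := fun hh => h1 ⟨by omega, hh⟩
        have h2 := hdom (j0 - 1) (by omega)
        omega
      have hj0k : j0 - 1 < r + a := by omega
      have hmpos : 0 < m ⟨j0 - 1, hj0k⟩ := by
        have hs1 := psumN_succ m hj0k
        have hs2 := psumN_succ m' hj0k
        have he : (j0 - 1) + 1 = j0 := by omega
        rw [he] at hs1 hs2
        have hmono := psumN_mono m' (Nat.sub_le j0 1)
        omega
      by_cases hEq : ∃ t, j0 ≤ t ∧ t ≤ r ∧ psumN m' t = psumN m t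
      · -- Case B: shift a unit from column `j0-1` to column `t2-1`
        obtain ⟨t2, ht2a, ht2b, ht2c, ht2min⟩ :
            ∃ t2, j0 ≤ t2 ∧ t2 ≤ r ∧ psumN m' t2 = psumN m t2 ∧
              ∀ t < t2, ¬(j0 ≤ t ∧ t ≤ r ∧ psumN m' t = psumN m t) :=
          ⟨Nat.find hEq, (Nat.find_spec hEq).1, (Nat.find_spec hEq).2.1,
            (Nat.find_spec hEq).2.2, fun t ht => Nat.find_min hEq ht⟩
        have hj0t2 : j0 < t2 := by
          rcases Nat.lt_or_ge j0 t2 with h | h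
          · exact h
          · have ht : t2 = j0 := by omega
            rw [ht] at ht2c
            omega
        have hstrict : ∀ s, j0 ≤ s → s ≤ t2 - 1 → psumN m' s < psumN m s := by
          intro s hs1 hs2
          have h1 := ht2min s (by omega)
          have h1' : ¬ psumN m' s = psumN m s := fun hh => h1 ⟨hs1, by omega, hh⟩
          have h2 := hdom s (by omega)
          omega
        have ht21k : t2 - 1 < r + a := by omega
        have hijlt : (⟨j0 - 1, hj0k⟩ : Fin (r + a)) < ⟨t2 - 1, ht21k⟩ := by
          rw [Fin.mk_lt_mk]
          omega
        have hm2mem : shiftMove m ⟨j0 - 1, hj0k⟩ ⟨t2 - 1, ht21k⟩ ∈ M :=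
          hMs m hm _ _ hijlt (by simp only [Fin.val_mk]; omega) hmpos
        have hsupp2 : SupportedOn r (shiftMove m ⟨j0 - 1, hj0k⟩ ⟨t2 - 1, ht21k⟩) :=
          supportedOn_shiftMove m (by simp only [Fin.val_mk]; omega)
            (by simp only [Fin.val_mk]; omega) hsm
        have hps : ∀ T, psumN (shiftMove m ⟨j0 - 1, hj0k⟩ ⟨t2 - 1, ht21k⟩) T +
            (if j0 - 1 < T then 1 else 0) = psumN m T + (if t2 - 1 < T then 1 else 0) := by
          intro T
          have h := psumN_shiftMove m ⟨j0 - 1, hj0k⟩ ⟨t2 - 1, ht21k⟩ (le_of_lt hijlt) hmpos T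
          simp only [Fin.val_mk, ne_eq, Fin.mk.injEq] at h
          have hcond : ((t2 - 1 < T ∧ ¬(j0 - 1 = t2 - 1))) ↔ (t2 - 1 < T) := by
            constructor
            · exact fun hh => hh.1
            · exact fun hh => ⟨hh, by omega⟩
          rwa [if_congr hcond rfl rfl] at h
        have hdom2 : ∀ j ≤ r, psumN m' j ≤
            psumN (shiftMove m ⟨j0 - 1, hj0k⟩ ⟨t2 - 1, ht21k⟩) j := by
          intro j hj
          have h := hps j
          rcases Nat.lt_or_ge j j0 with hc | hc
          · rw [if_neg (by omega), if_neg (by omega)] at h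
            have := hdom j hj
            omega
          · rcases Nat.lt_or_ge j t2 with hc2 | hc2
            · have := hstrict j hc (by omega)
              rw [if_pos (by omega), if_neg (by omega)] at h
              omega
            · rw [if_pos (by omega), if_pos (by omega)] at h
              have := hdom j hj
              omega
        have hsum2 : (∑ j ∈ Finset.range (r + 1),
            (psumN (shiftMove m ⟨j0 - 1, hj0k⟩ ⟨t2 - 1, ht21k⟩) j - psumN m' j)) ≤ N := by
          have hlt : (∑ j ∈ Finset.range (r + 1),
              (psumN (shiftMove m ⟨j0 - 1, hj0k⟩ ⟨t2 - 1, ht21k⟩) j - psumN m' j)) <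
              ∑ j ∈ Finset.range (r + 1), (psumN m j - psumN m' j) := by
            apply Finset.sum_lt_sum
            · intro j _
              have h := hps j
              split_ifs at h <;> omega
            · refine ⟨j0, Finset.mem_range.2 (by omega), ?_⟩
              have h := hps j0
              rw [if_pos (by omega), if_neg (by omega)] at h
              omega
          omega
        exact ih _ hm2mem hsupp2 m' hsm' hdom2 hsum2
      · -- Case A: divide by the variable of column `j0-1`
        push_neg at hEq
        have hstrict : ∀ s, j0 ≤ s → s ≤ r → psumN m' s < psumN m s := by
          intro s h1 h2
          have h3 := hEq s h1 h2
          have h4 := hdom s h2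
          omega
        have hm2mem : shiftMove m ⟨j0 - 1, hj0k⟩ ⟨j0 - 1, hj0k⟩ ∈ M :=
          hMc m hm _ (shiftMove_self_le m _)
        have hsupp2 : SupportedOn r (shiftMove m ⟨j0 - 1, hj0k⟩ ⟨j0 - 1, hj0k⟩) :=
          supportedOn_shiftMove m (by simp only [Fin.val_mk]; omega)
            (by simp only [Fin.val_mk]; omega) hsm
        have hps : ∀ T, psumN (shiftMove m ⟨j0 - 1, hj0k⟩ ⟨j0 - 1, hj0k⟩) T +
            (if j0 - 1 < T then 1 else 0) = psumN m T := by
          intro T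
          have h := psumN_shiftMove m ⟨j0 - 1, hj0k⟩ ⟨j0 - 1, hj0k⟩ le_rfl hmpos T
          simp only [Fin.val_mk, ne_eq, Fin.mk.injEq, eq_self_iff_true, not_true_eq_false,
            and_false, if_false, add_zero] at h
          exact h
        have hdom2 : ∀ j ≤ r, psumN m' j ≤
            psumN (shiftMove m ⟨j0 - 1, hj0k⟩ ⟨j0 - 1, hj0k⟩) j := by
          intro j hj
          have h := hps j
          rcases Nat.lt_or_ge j j0 with hc | hc
          · rw [if_neg (by omega)] at h
            have := hdom j hj
            omega
          · rw [if_pos (by omega)] at h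
            have := hstrict j hc hj
            omega
        have hsum2 : (∑ j ∈ Finset.range (r + 1),
            (psumN (shiftMove m ⟨j0 - 1, hj0k⟩ ⟨j0 - 1, hj0k⟩) j - psumN m' j)) ≤ N := by
          have hlt : (∑ j ∈ Finset.range (r + 1),
              (psumN (shiftMove m ⟨j0 - 1, hj0k⟩ ⟨j0 - 1, hj0k⟩) j - psumN m' j)) <
              ∑ j ∈ Finset.range (r + 1), (psumN m j - psumN m' j) := by
            apply Finset.sum_lt_sum
            · intro j _
              have h := hps j
              split_ifs at h <;> omega
            · refine ⟨j0, Finset.mem_range.2 (by omega), ?_⟩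
              have h := hps j0
              rw [if_pos (by omega)] at h
              omega
          omega
        exact ih _ hm2mem hsupp2 m' hsm' hdom2 hsum2

end LamBijAux

open LamBijAux in
/-- (Proposition 3.2(b)) `Q ↦ λ(Q)` is a bijection from order ideals of
the lattice-path poset `𝓛_{r,a}` onto shifted multicomplexes on `W_r` of degree `≤ a`. -/
theorem lam_bijection_orderIdeals_shiftedMulticomplexes (r a : ℕ) (hr : 0 < r) (ha : 0 < a) :
    Set.BijOn (fun Q : Set (NPath (r + a) a) => lamP r '' Q)
      {Q : Set (NPath (r + a) a) | IsOrderIdealP Q}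
      {M : Set (Fin (r + a) → ℕ) |
        (∀ m ∈ M, SupportedOn r m ∧ degM m ≤ a) ∧ IsMulticx M ∧ ShiftedMC r M} := by
  refine ⟨?_, ?_, ?_⟩
  · -- MapsTo
    intro Q hQ
    simp only [Set.mem_setOf_eq] at hQ ⊢
    have key : ∀ m' : Fin (r + a) → ℕ, SupportedOn r m' → degM m' ≤ a →
        (∃ L ∈ Q, ∀ j ≤ r, psumN m' j ≤ psumN (lamP r L) j) → m' ∈ lamP r '' Q := by
      rintro m' hs hd ⟨L, hL, hdom⟩
      refine ⟨pathOf m' hd, hQ L hL _ ?_, lamP_pathOf m' hs hd⟩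
      rw [pathLe_iff_psum hr]
      intro j hj
      rw [lamP_pathOf m' hs hd]
      exact hdom j hj
    refine ⟨?_, ?_, ?_⟩
    · rintro m ⟨L, hL, rfl⟩
      exact ⟨supportedOn_lamP L, degM_lamP_le hr L⟩
    · rintro m ⟨L, hL, rfl⟩ m' hm'
      apply key
      · intro i hi
        have h1 := hm' i
        have h2 := supportedOn_lamP L i hi
        omega
      · exact le_trans (degM_le_of_le hm') (degM_lamP_le hr L)
      · exact ⟨L, hL, fun j _ => psumN_le_of_le hm' j⟩
    · rintro m ⟨L, hL, rfl⟩ i j hij hjr hpos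
      have hijv : (i : ℕ) < (j : ℕ) := hij
      apply key
      · exact supportedOn_shiftMove _ (by omega) hjr (supportedOn_lamP L)
      · exact le_trans (degM_shiftMove_le _ _ _ (le_of_lt hij) hpos) (degM_lamP_le hr L)
      · exact ⟨L, hL, fun j' _ => psumN_shiftMove_le _ _ _ (le_of_lt hij) hpos j'⟩
  · -- InjOn
    intro Q1 h1 Q2 h2 him
    simp only at him
    ext L
    constructor
    · intro hL
      have hmem : lamP r L ∈ lamP r '' Q2 := him ▸ Set.mem_image_of_mem _ hL
      obtain ⟨L2, hL2, he⟩ := hmem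
      exact (lamP_injective hr he) ▸ hL2
    · intro hL
      have hmem : lamP r L ∈ lamP r '' Q1 := him.symm ▸ Set.mem_image_of_mem _ hL
      obtain ⟨L1, hL1, he⟩ := hmem
      exact (lamP_injective hr he) ▸ hL1
  · -- SurjOn
    intro M hM
    obtain ⟨hMd, hMc, hMs⟩ := hM
    refine ⟨{L | lamP r L ∈ M}, ?_, ?_⟩
    · simp only [Set.mem_setOf_eq]
      intro L hL L' hle
      simp only [Set.mem_setOf_eq] at hL ⊢
      have hdom := (pathLe_iff_psum hr L' L).1 hle
      exact dom_mem M hMc hMs _ (lamP r L) hL (supportedOn_lamP L) (lamP r L')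
        (supportedOn_lamP L') hdom le_rfl
    · show lamP r '' {L | lamP r L ∈ M} = M
      ext m
      constructor
      · rintro ⟨L, hL, rfl⟩
        exact hL
      · intro hm
        obtain ⟨hs, hd⟩ := hMd m hm
        exact ⟨pathOf m hd, by
          simp only [Set.mem_setOf_eq]
          rw [lamP_pathOf m hs hd]
          exact hm, lamP_pathOf m hs hd⟩
end
end

section
/- For positive integers r and a, the map M ↦ φ̄(M) := {φ^a(m) : m ∈ M} is a bijection from the set of shifted multicomplexes on W_r consisting of monomials of degree at most a onto the set of shifted families of a-element subsets of [r+a]; its inverse sends a shifted family 𝒜 to {ψ(F) : F ∈ 𝒜}. -/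
open Finset

noncomputable section

section AuxBFS

variable {k : ℕ}

/-- Partial sum of exponents with index `< i`. -/
def Smm (m : Fin k → ℕ) (i : ℕ) : ℕ :=
  ∑ j ∈ Finset.univ.filter (fun j : Fin k => (j : ℕ) < i), m j

/-- Number of non-members with value `< x`. -/
def cLt (F : Finset (Fin k)) (x : ℕ) : ℕ :=
  (Finset.univ.filter (fun j : Fin k => (j : ℕ) < x ∧ j ∉ F)).card

lemma Smm_zero (m : Fin k → ℕ) : Smm m 0 = 0 := by
  simp [Smm]

lemma Smm_succ (m : Fin k → ℕ) {i : ℕ} (h : i < k) :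
    Smm m (i + 1) = Smm m i + m ⟨i, h⟩ := by
  unfold Smm
  rw [show (Finset.univ.filter (fun j : Fin k => (j : ℕ) < i + 1))
      = insert ⟨i, h⟩ (Finset.univ.filter (fun j : Fin k => (j : ℕ) < i)) by
    ext j
    simp only [Finset.mem_filter, Finset.mem_univ, true_and, Finset.mem_insert]
    constructor
    · intro hj
      rcases Nat.lt_succ_iff_lt_or_eq.1 hj with h1 | h1
      · exact Or.inr h1
      · exact Or.inl (Fin.ext h1)
    · rintro (rfl | hj)
      · simp
      · omega]
  rw [Finset.sum_insert (by simp)]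
  ring

lemma Smm_mono (m : Fin k → ℕ) {i j : ℕ} (h : i ≤ j) : Smm m i ≤ Smm m j := by
  apply Finset.sum_le_sum_of_subset
  intro x hx
  simp only [Finset.mem_filter, Finset.mem_univ, true_and] at hx ⊢
  omega

lemma Smm_le_degM (m : Fin k → ℕ) (i : ℕ) : Smm m i ≤ degM m := by
  apply Finset.sum_le_sum_of_subset
  intro x _; simp

lemma degM_eq_Smm {r : ℕ} {m : Fin k → ℕ} (hs : SupportedOn r m) {i : ℕ} (h : r ≤ i) :
    degM m = Smm m i := by
  unfold degM Smm
  rw [← Finset.sum_filter_add_sum_filter_not Finset.univ (fun j : Fin k => (j : ℕ) < i)]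
  have : ∑ j ∈ Finset.univ.filter (fun j : Fin k => ¬ (j : ℕ) < i), m j = 0 := by
    apply Finset.sum_eq_zero
    intro x hx
    simp only [Finset.mem_filter, Finset.mem_univ, true_and, not_lt] at hx
    exact hs x (le_trans h hx)
  omega

lemma Smm_le_of_le {m m' : Fin k → ℕ} (h : ∀ x, m' x ≤ m x) (i : ℕ) :
    Smm m' i ≤ Smm m i :=
  Finset.sum_le_sum (fun x _ => h x)

lemma Smm_eq_of_eq_below {m m' : Fin k → ℕ} {i : ℕ}
    (h : ∀ x : Fin k, (x : ℕ) < i → m' x = m x) : Smm m' i = Smm m i := by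
  apply Finset.sum_congr rfl
  intro x hx
  simp only [Finset.mem_filter, Finset.mem_univ, true_and] at hx
  exact h x hx

lemma cLt_mono (F : Finset (Fin k)) {x y : ℕ} (h : x ≤ y) : cLt F x ≤ cLt F y := by
  apply Finset.card_le_card
  intro j hj
  simp only [Finset.mem_filter, Finset.mem_univ, true_and] at hj ⊢
  exact ⟨lt_of_lt_of_le hj.1 h, hj.2⟩

lemma cLt_succ (F : Finset (Fin k)) {x : ℕ} (h : x < k) :
    cLt F (x + 1) = cLt F x + (if (⟨x, h⟩ : Fin k) ∈ F then 0 else 1) := by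
  unfold cLt
  by_cases hm : (⟨x, h⟩ : Fin k) ∈ F
  · rw [if_pos hm]
    rw [show (Finset.univ.filter (fun j : Fin k => (j : ℕ) < x + 1 ∧ j ∉ F))
        = (Finset.univ.filter (fun j : Fin k => (j : ℕ) < x ∧ j ∉ F)) by
      ext j
      simp only [Finset.mem_filter, Finset.mem_univ, true_and]
      constructor
      · rintro ⟨h1, h2⟩
        refine ⟨?_, h2⟩
        rcases Nat.lt_succ_iff_lt_or_eq.1 h1 with h3 | h3
        · exact h3
        · exact absurd (show j = ⟨x, h⟩ from Fin.ext h3) (fun he => h2 (he ▸ hm))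
      · rintro ⟨h1, h2⟩; exact ⟨by omega, h2⟩]
    omega
  · rw [if_neg hm]
    rw [show (Finset.univ.filter (fun j : Fin k => (j : ℕ) < x + 1 ∧ j ∉ F))
        = insert ⟨x, h⟩ (Finset.univ.filter (fun j : Fin k => (j : ℕ) < x ∧ j ∉ F)) by
      ext j
      simp only [Finset.mem_filter, Finset.mem_univ, true_and, Finset.mem_insert]
      constructor
      · rintro ⟨h1, h2⟩
        rcases Nat.lt_succ_iff_lt_or_eq.1 h1 with h3 | h3
        · exact Or.inr ⟨h3, h2⟩
        · exact Or.inl (Fin.ext h3)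
      · rintro (rfl | ⟨h1, h2⟩)
        · exact ⟨by simp, hm⟩
        · exact ⟨by omega, h2⟩]
    rw [Finset.card_insert_of_notMem (by simp)]

lemma cLt_succ_of_ge (F : Finset (Fin k)) {x : ℕ} (h : k ≤ x) :
    cLt F (x + 1) = cLt F x := by
  unfold cLt
  congr 1
  ext j
  simp only [Finset.mem_filter, Finset.mem_univ, true_and]
  have := j.isLt
  constructor
  · rintro ⟨_, h2⟩; exact ⟨by omega, h2⟩
  · rintro ⟨_, h2⟩; exact ⟨by omega, h2⟩

lemma cLt_of_ge (F : Finset (Fin k)) {x : ℕ} (h : k ≤ x) : cLt F x = cLt F k := by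
  unfold cLt
  congr 1
  ext j
  simp only [Finset.mem_filter, Finset.mem_univ, true_and]
  have := j.isLt
  constructor
  · rintro ⟨_, h2⟩; exact ⟨by omega, h2⟩
  · rintro ⟨_, h2⟩; exact ⟨by omega, h2⟩

lemma cLt_k (F : Finset (Fin k)) : cLt F k = k - F.card := by
  unfold cLt
  rw [show (Finset.univ.filter (fun j : Fin k => (j : ℕ) < k ∧ j ∉ F)) = Fᶜ by
    ext j; simp [j.isLt]]
  rw [Finset.card_compl, Fintype.card_fin]

lemma xcoordS_eq_cLt (F : Finset (Fin k)) (p : Fin k) : xcoordS F p = cLt F (p : ℕ) := by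
  unfold xcoordS cLt
  congr 1

lemma card_filter_val_lt {U : ℕ} (h : U ≤ k) :
    (Finset.univ.filter (fun p : Fin k => (p : ℕ) < U)).card = U := by
  rw [show (Finset.univ.filter (fun p : Fin k => (p : ℕ) < U))
      = (Finset.range U).attachFin (fun m hm => lt_of_lt_of_le (Finset.mem_range.1 hm) h) by
    ext p; simp]
  rw [Finset.card_attachFin, Finset.card_range]

lemma card_filter_Ico {L U : ℕ} (h : U ≤ k) :
    (Finset.univ.filter (fun p : Fin k => L ≤ (p : ℕ) ∧ (p : ℕ) < U)).card = U - L := by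
  have h1 : (Finset.univ.filter (fun p : Fin k => (p : ℕ) < U))
      = (Finset.univ.filter (fun p : Fin k => L ≤ (p : ℕ) ∧ (p : ℕ) < U))
        ∪ (Finset.univ.filter (fun p : Fin k => (p : ℕ) < min L U)) := by
    ext p
    simp only [Finset.mem_filter, Finset.mem_univ, true_and, Finset.mem_union, lt_min_iff]
    omega
  have h2 : Disjoint (Finset.univ.filter (fun p : Fin k => L ≤ (p : ℕ) ∧ (p : ℕ) < U))
      (Finset.univ.filter (fun p : Fin k => (p : ℕ) < min L U)) := by
    rw [Finset.disjoint_left]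
    intro p hp hq
    simp only [Finset.mem_filter, Finset.mem_univ, true_and, lt_min_iff] at hp hq
    omega
  have := Finset.card_union_of_disjoint h2
  rw [← h1] at this
  rw [card_filter_val_lt h, card_filter_val_lt (le_trans (min_le_right _ _) h)] at this
  omega

end AuxBFS

section Phi

variable {r a : ℕ}

/-- Position of the `(i+1)`-st east step of the path of `m`. -/
def ePos {k : ℕ} (m : Fin k → ℕ) (i : ℕ) : ℕ := Smm m (i + 1) + i

lemma psum_eq_Smm {k : ℕ} (m : Fin k → ℕ) (i : Fin k) : psum m i = Smm m (i : ℕ) := rfl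

lemma ePos_mono {k : ℕ} (m : Fin k → ℕ) {i j : ℕ} (h : i ≤ j) : ePos m i ≤ ePos m j := by
  unfold ePos
  have := Smm_mono m (show i + 1 ≤ j + 1 by omega)
  omega

lemma ePos_strict {k : ℕ} (m : Fin k → ℕ) {i j : ℕ} (h : i < j) : ePos m i < ePos m j := by
  unfold ePos
  have := Smm_mono m (show i + 1 ≤ j + 1 by omega)
  omega

lemma mem_phiM_iff (m : Fin (r+a) → ℕ) (p : Fin (r+a)) :
    p ∈ phiM r m ↔
      (∃ i : ℕ, i < r ∧ Smm m i + i ≤ (p : ℕ) ∧ (p : ℕ) < Smm m (i+1) + i) ∨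
      degM m + r ≤ (p : ℕ) := by
  unfold phiM
  rw [Finset.mem_filter]
  simp only [Finset.mem_univ, true_and]
  constructor
  · rintro (⟨i, hir, h1, h2⟩ | h)
    · left
      refine ⟨(i : ℕ), hir, ?_, ?_⟩
      · rw [psum_eq_Smm] at h1; exact h1
      · rw [Smm_succ m i.isLt]
        rw [psum_eq_Smm] at h2
        simpa [Fin.eta] using h2
    · exact Or.inr h
  · rintro (⟨i, hir, h1, h2⟩ | h)
    · left
      have hik : i < r + a := by omega
      refine ⟨⟨i, hik⟩, hir, h1, ?_⟩
      rw [Smm_succ m hik] at h2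
      rw [psum_eq_Smm]
      exact h2
    · exact Or.inr h

lemma ePos_lt_k {m : Fin (r+a) → ℕ} (hd : degM m ≤ a) (hr : 0 < r) {i : ℕ} (hi : i < r) :
    ePos m i < r + a := by
  have := Smm_le_degM m (i + 1)
  unfold ePos
  omega

lemma ePos_not_mem {m : Fin (r+a) → ℕ} (hd : degM m ≤ a) {i : ℕ} (hi : i < r)
    {p : Fin (r+a)} (hp : (p : ℕ) = ePos m i) : p ∉ phiM r m := by
  rw [mem_phiM_iff]
  rintro (⟨i', hi', h1, h2⟩ | h)
  · rcases le_or_gt i' i with hc | hc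
    · have := Smm_mono m (show i' + 1 ≤ i + 1 by omega)
      unfold ePos at hp
      omega
    · have := Smm_mono m (show i + 1 ≤ i' by omega)
      unfold ePos at hp
      omega
  · have := Smm_le_degM m (i + 1)
    unfold ePos at hp
    omega

lemma not_mem_phiM {m : Fin (r+a) → ℕ} (hs : SupportedOn r m) (hr : 0 < r)
    {p : Fin (r+a)} (hp : p ∉ phiM r m) : ∃ i : ℕ, i < r ∧ (p : ℕ) = ePos m i := by
  have hptail : (p : ℕ) < degM m + r := by
    by_contra hc
    exact hp ((mem_phiM_iff m p).2 (Or.inr (by omega)))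
  have hP0 : Smm m 0 + 0 ≤ (p : ℕ) := by simp [Smm_zero]
  obtain ⟨i₀, hi₀le, hPi₀, hgr⟩ :
      ∃ i₀, i₀ ≤ r - 1 ∧ Smm m i₀ + i₀ ≤ (p : ℕ) ∧
        ∀ i', i₀ < i' → i' ≤ r - 1 → ¬ (Smm m i' + i' ≤ (p : ℕ)) := by
    refine ⟨Nat.findGreatest (fun i => Smm m i + i ≤ (p : ℕ)) (r - 1),
      Nat.findGreatest_le _,
      Nat.findGreatest_spec (P := fun i => Smm m i + i ≤ (p : ℕ)) (Nat.zero_le _) hP0,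
      fun i' h1 h2 =>
        Nat.findGreatest_is_greatest (P := fun i => Smm m i + i ≤ (p : ℕ)) h1 h2⟩
  have hub : (p : ℕ) ≤ Smm m (i₀ + 1) + i₀ := by
    rcases Nat.lt_or_ge i₀ (r - 1) with hc | hc
    · have hng := hgr (i₀ + 1) (by omega) (by omega)
      omega
    · have h1 : degM m = Smm m r := degM_eq_Smm hs le_rfl
      have h2 : Smm m (i₀ + 1) = Smm m r := by congr 1; omega
      omega
  have hint : ¬ ((p : ℕ) < Smm m (i₀ + 1) + i₀) := by
    intro hc
    exact hp ((mem_phiM_iff m p).2 (Or.inl ⟨i₀, by omega, hPi₀, hc⟩))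
  exact ⟨i₀, by omega, by unfold ePos; omega⟩

lemma cLt_phiM {m : Fin (r+a) → ℕ} (hs : SupportedOn r m) (hd : degM m ≤ a) (hr : 0 < r)
    (x : ℕ) :
    cLt (phiM r m) x = ((Finset.range r).filter (fun i => ePos m i < x)).card := by
  unfold cLt
  symm
  refine Finset.card_bij
    (fun i hi => (⟨ePos m i, ePos_lt_k hd hr
      (Finset.mem_range.1 (Finset.mem_filter.1 hi).1)⟩ : Fin (r+a))) ?_ ?_ ?_
  · intro i hi
    rw [Finset.mem_filter] at hi ⊢
    exact ⟨Finset.mem_univ _,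
      hi.2, ePos_not_mem hd (Finset.mem_range.1 hi.1) rfl⟩
  · intro i hi j hj hij
    have h1 : ePos m i = ePos m j := congrArg Fin.val hij
    rcases lt_trichotomy i j with hc | hc | hc
    · exact absurd h1 (ne_of_lt (ePos_strict m hc))
    · exact hc
    · exact absurd h1.symm (ne_of_lt (ePos_strict m hc))
  · intro j hj
    rw [Finset.mem_filter] at hj
    obtain ⟨i, hir, he⟩ := not_mem_phiM hs hr hj.2.2
    exact ⟨i, Finset.mem_filter.2 ⟨Finset.mem_range.2 hir, he ▸ hj.2.1⟩,
      Fin.ext he.symm⟩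

end Phi

section Phi2

variable {r a : ℕ}

lemma card_phiM {m : Fin (r+a) → ℕ} (hs : SupportedOn r m) (hd : degM m ≤ a) (hr : 0 < r) :
    (phiM r m).card = a := by
  have h1 := cLt_k (phiM r m)
  have h2 := cLt_phiM hs hd hr (r + a)
  have h3 : ((Finset.range r).filter (fun i => ePos m i < r + a)) = Finset.range r := by
    apply Finset.filter_true_of_mem
    intro i hi
    exact ePos_lt_k hd hr (Finset.mem_range.1 hi)
  rw [h3, Finset.card_range] at h2
  have h4 : (phiM r m).card ≤ r + a := by
    simpa using Finset.card_le_card (Finset.subset_univ (phiM r m))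
  omega

lemma mem_phiM_of_interval {m : Fin (r+a) → ℕ} {i : ℕ} (hi : i < r) {p : Fin (r+a)}
    (h1 : Smm m i + i ≤ (p : ℕ)) (h2 : (p : ℕ) < Smm m (i+1) + i) : p ∈ phiM r m :=
  (mem_phiM_iff m p).2 (Or.inl ⟨i, hi, h1, h2⟩)

lemma cLt_phiM_interval {m : Fin (r+a) → ℕ} (hs : SupportedOn r m) (hd : degM m ≤ a)
    (hr : 0 < r) {i : ℕ} (hi : i < r) {p : Fin (r+a)}
    (h1 : Smm m i + i ≤ (p : ℕ)) (h2 : (p : ℕ) < Smm m (i+1) + i) :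
    cLt (phiM r m) (p : ℕ) = i := by
  rw [cLt_phiM hs hd hr]
  rw [show ((Finset.range r).filter (fun i' => ePos m i' < (p : ℕ))) = Finset.range i by
    ext i'
    simp only [Finset.mem_filter, Finset.mem_range]
    constructor
    · rintro ⟨h3, h4⟩
      by_contra hc
      have h5 : Smm m (i+1) ≤ Smm m (i'+1) := Smm_mono m (by omega)
      unfold ePos at h4
      omega
    · intro h3
      have h5 : Smm m (i'+1) ≤ Smm m i := Smm_mono m (by omega)
      unfold ePos
      exact ⟨by omega, by omega⟩]
  exact Finset.card_range i

lemma cLt_phiM_tail {m : Fin (r+a) → ℕ} (hs : SupportedOn r m) (hd : degM m ≤ a)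
    (hr : 0 < r) {p : Fin (r+a)} (h : degM m + r ≤ (p : ℕ)) :
    cLt (phiM r m) (p : ℕ) = r := by
  rw [cLt_phiM hs hd hr]
  rw [Finset.filter_true_of_mem, Finset.card_range]
  intro i hi
  have h1 := Smm_le_degM m (i + 1)
  have h2 := Finset.mem_range.1 hi
  unfold ePos
  omega

/-- ψ ∘ φ = id on supported monomials of degree ≤ a. -/
lemma psiM_phiM {m : Fin (r+a) → ℕ} (hs : SupportedOn r m) (hd : degM m ≤ a) (hr : 0 < r) :
    psiM r (phiM r m) = m := by
  funext i
  unfold psiM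
  by_cases hir : (i : ℕ) < r
  · rw [if_pos hir]
    rw [show (phiM r m).filter (fun p => xcoordS (phiM r m) p = (i : ℕ))
        = Finset.univ.filter (fun p : Fin (r+a) =>
            Smm m (i : ℕ) + (i : ℕ) ≤ (p : ℕ) ∧ (p : ℕ) < Smm m ((i : ℕ)+1) + (i : ℕ)) by
      ext p
      simp only [Finset.mem_filter, Finset.mem_univ, true_and]
      constructor
      · rintro ⟨hp, hxc⟩
        rw [xcoordS_eq_cLt] at hxc
        rcases (mem_phiM_iff m p).1 hp with ⟨i', hi', h1, h2⟩ | h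
        · have := cLt_phiM_interval hs hd hr hi' h1 h2
          have : i' = (i : ℕ) := by omega
          subst this
          exact ⟨h1, h2⟩
        · have := cLt_phiM_tail hs hd hr h
          omega
      · rintro ⟨h1, h2⟩
        refine ⟨mem_phiM_of_interval hir h1 h2, ?_⟩
        rw [xcoordS_eq_cLt]
        exact cLt_phiM_interval hs hd hr hir h1 h2]
    have hU : Smm m ((i : ℕ)+1) + (i : ℕ) ≤ r + a := by
      have := Smm_le_degM m ((i : ℕ) + 1)
      omega
    rw [card_filter_Ico hU]
    rw [Smm_succ m (show (i : ℕ) < r + a by omega)]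
    simp only [Fin.eta]
    omega
  · rw [if_neg hir]
    exact (hs i (by omega)).symm

/-- Monotone comparison transfers from partial sums to path east-counts. -/
lemma cLt_phiM_le_of_Smm {m m' : Fin (r+a) → ℕ}
    (hs : SupportedOn r m) (hd : degM m ≤ a) (hs' : SupportedOn r m') (hd' : degM m' ≤ a)
    (hr : 0 < r) (h : ∀ i, i ≤ r → Smm m' i ≤ Smm m i) (x : ℕ) :
    cLt (phiM r m) x ≤ cLt (phiM r m') x := by
  rw [cLt_phiM hs hd hr, cLt_phiM hs' hd' hr]
  apply Finset.card_le_card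
  intro i hi
  rw [Finset.mem_filter] at hi ⊢
  refine ⟨hi.1, ?_⟩
  have h1 := h (i + 1) (by have := Finset.mem_range.1 hi.1; omega)
  have h2 := hi.2
  unfold ePos at h2 ⊢
  omega

lemma Smm_le_of_cLt_phiM {m m' : Fin (r+a) → ℕ}
    (hs : SupportedOn r m) (hd : degM m ≤ a) (hs' : SupportedOn r m') (hd' : degM m' ≤ a)
    (hr : 0 < r) (h : ∀ x, cLt (phiM r m) x ≤ cLt (phiM r m') x) :
    ∀ i, i ≤ r → Smm m' i ≤ Smm m i := by
  intro i hi
  rcases Nat.eq_zero_or_pos i with rfl | hipos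
  · simp [Smm_zero]
  obtain ⟨t, rfl⟩ : ∃ t, i = t + 1 := ⟨i - 1, by omega⟩
  have ht : t < r := by omega
  have key : ePos m' t ≤ ePos m t := by
    by_contra hc
    push_neg at hc
    have h1 : Finset.range (t+1) ⊆ (Finset.range r).filter (fun i' => ePos m i' < ePos m t + 1) := by
      intro i' hi'
      rw [Finset.mem_range] at hi'
      rw [Finset.mem_filter, Finset.mem_range]
      exact ⟨by omega, by have := ePos_mono m (show i' ≤ t by omega); omega⟩
    have h2 : ((Finset.range r).filter (fun i' => ePos m' i' < ePos m t + 1))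
        ⊆ Finset.range t := by
      intro i' hi'
      rw [Finset.mem_filter] at hi'
      rw [Finset.mem_range]
      by_contra hc2
      have := ePos_mono m' (show t ≤ i' by omega)
      omega
    have h3 := Finset.card_le_card h1
    have h4 := Finset.card_le_card h2
    have h5 := h (ePos m t + 1)
    rw [cLt_phiM hs hd hr, cLt_phiM hs' hd' hr] at h5
    rw [Finset.card_range] at h3 h4
    omega
  unfold ePos at key
  omega

end Phi2

section Psi

variable {r a : ℕ}

lemma psiM_supported (F : Finset (Fin (r+a))) : SupportedOn r (psiM r F) := by
  intro i hi
  unfold psiM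
  rw [if_neg (by omega)]

lemma cLt_lt_r_of_not_mem {F : Finset (Fin (r+a))} (hF : F.card = a) {p : Fin (r+a)}
    (hp : p ∉ F) : cLt F (p : ℕ) < r := by
  have h1 : cLt F ((p : ℕ) + 1) = cLt F (p : ℕ) + 1 := by
    rw [cLt_succ F p.isLt]
    simp only [Fin.eta]
    rw [if_neg hp]
  have h2 : cLt F ((p : ℕ) + 1) ≤ cLt F (r + a) := cLt_mono F (by omega)
  have h3 := cLt_k F
  rw [hF] at h3
  omega

lemma cLt_le_r {F : Finset (Fin (r+a))} (hF : F.card = a) (x : ℕ) : cLt F x ≤ r := by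
  have h3 := cLt_k F
  rw [hF] at h3
  rcases le_or_gt x (r + a) with h | h
  · have := cLt_mono F h
    omega
  · rw [cLt_of_ge F h.le]
    omega

lemma val_eq_cLt_add {k : ℕ} (F : Finset (Fin k)) (p : Fin k) :
    (p : ℕ) = cLt F (p : ℕ) + (F.filter (fun j => j < p)).card := by
  have h0 : (Finset.univ.filter (fun j : Fin k => (j : ℕ) < (p : ℕ))).card = (p : ℕ) :=
    card_filter_val_lt p.isLt.le
  have h1 := Finset.card_filter_add_card_filter_not
    (s := Finset.univ.filter (fun j : Fin k => (j : ℕ) < (p : ℕ)))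
    (p := fun j => j ∉ F)
  rw [Finset.filter_filter, Finset.filter_filter] at h1
  have e1 : Finset.univ.filter (fun j : Fin k => (j : ℕ) < (p : ℕ) ∧ j ∉ F)
      = Finset.univ.filter (fun j : Fin k => (j : ℕ) < (p : ℕ) ∧ j ∉ F) := rfl
  have e2 : Finset.univ.filter (fun j : Fin k => (j : ℕ) < (p : ℕ) ∧ ¬ j ∉ F)
      = F.filter (fun j => j < p) := by
    ext j
    simp only [Finset.mem_filter, Finset.mem_univ, true_and, not_not, Fin.lt_def]
    tauto
  rw [e2] at h1
  rw [h0] at h1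
  unfold cLt
  omega

lemma Smm_psiM {F : Finset (Fin (r+a))} (ha : 0 < a) {i : ℕ} (hi : i ≤ r) :
    Smm (psiM r F) i = (F.filter (fun p => cLt F p.val < i)).card := by
  have hfib : ∀ p ∈ F.filter (fun p => cLt F p.val < i),
      cLt F (p : ℕ) ∈ Finset.range i := by
    intro p hp
    rw [Finset.mem_filter] at hp
    exact Finset.mem_range.2 hp.2
  rw [Finset.card_eq_sum_card_fiberwise hfib]
  unfold Smm
  rw [Finset.sum_bij' (i := fun (j : Fin (r+a)) _ => (j : ℕ))
    (j := fun (t : ℕ) (ht : t ∈ Finset.range i) =>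
      (⟨t, by have := Finset.mem_range.1 ht; omega⟩ : Fin (r+a)))
    (hi := ?_) (hj := ?_) (left_neg := ?_) (right_neg := ?_) (h := ?_)]
  · intro j hj
    rw [Finset.mem_filter] at hj
    exact Finset.mem_range.2 hj.2
  · intro t ht
    rw [Finset.mem_filter]
    exact ⟨Finset.mem_univ _, Finset.mem_range.1 ht⟩
  · intro j hj
    exact Fin.eta j j.isLt
  · intro t ht
    rfl
  · intro j hj
    rw [Finset.mem_filter] at hj
    unfold psiM
    rw [if_pos (by omega)]
    apply Finset.card_bij (fun p _ => p)
    · intro p hp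
      rw [Finset.mem_filter] at hp ⊢
      rw [Finset.mem_filter]
      rw [xcoordS_eq_cLt] at hp
      exact ⟨⟨hp.1, by omega⟩, hp.2⟩
    · intro p q _ _ h; exact h
    · intro p hp
      rw [Finset.mem_filter, Finset.mem_filter] at hp
      refine ⟨p, ?_, rfl⟩
      rw [Finset.mem_filter, xcoordS_eq_cLt]
      exact ⟨hp.1.1, hp.2⟩

lemma degM_psiM {F : Finset (Fin (r+a))} (ha : 0 < a) :
    degM (psiM r F) = (F.filter (fun p => cLt F p.val < r)).card := by
  rw [degM_eq_Smm (psiM_supported F) le_rfl]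
  exact Smm_psiM ha le_rfl

lemma degM_psiM_le {F : Finset (Fin (r+a))} (ha : 0 < a) (hF : F.card = a) :
    degM (psiM r F) ≤ a := by
  rw [degM_psiM ha]
  calc (F.filter (fun p => cLt F p.val < r)).card ≤ F.card := Finset.card_filter_le _ _
    _ = a := hF

end Psi

section PhiPsi

variable {r a : ℕ}

lemma psiM_apply_lt {F : Finset (Fin (r+a))} {i : ℕ} (h : i < r) (hk : i < r + a) :
    psiM r F ⟨i, hk⟩ = (F.filter (fun j => cLt F j.val = i)).card := by
  unfold psiM
  rw [if_pos (show ((⟨i, hk⟩ : Fin (r+a)) : ℕ) < r from h)]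
  congr 1

/-- φ ∘ ψ = id on `a`-subsets. -/
lemma phiM_psiM {F : Finset (Fin (r+a))} (hr : 0 < r) (ha : 0 < a) (hF : F.card = a) :
    phiM r (psiM r F) = F := by
  set m := psiM r F with hm
  have hsupp : SupportedOn r m := psiM_supported F
  have hdeg : degM m ≤ a := degM_psiM_le ha hF
  have main : ∀ p : Fin (r+a),
      (p : ℕ) = cLt F (p : ℕ) + Smm m (cLt F (p : ℕ))
        + (F.filter (fun j => j < p ∧ cLt F j.val = cLt F (p : ℕ))).card := by
    intro p
    have hile : cLt F (p : ℕ) ≤ r := cLt_le_r hF _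
    have hsplit := Finset.card_filter_add_card_filter_not
      (s := F.filter (fun j => j < p)) (p := fun j => cLt F j.val < cLt F (p : ℕ))
    rw [Finset.filter_filter, Finset.filter_filter] at hsplit
    have e1 : F.filter (fun j => j < p ∧ cLt F j.val < cLt F (p : ℕ))
        = F.filter (fun j => cLt F j.val < cLt F (p : ℕ)) := by
      ext j
      simp only [Finset.mem_filter]
      refine ⟨fun h => ⟨h.1, h.2.2⟩, fun h => ⟨h.1, ?_, h.2⟩⟩
      rw [Fin.lt_def]
      by_contra hc
      have := cLt_mono F (show (p : ℕ) ≤ (j : ℕ) by omega)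
      omega
    have e2 : F.filter (fun j => j < p ∧ ¬ cLt F j.val < cLt F (p : ℕ))
        = F.filter (fun j => j < p ∧ cLt F j.val = cLt F (p : ℕ)) := by
      ext j
      simp only [Finset.mem_filter]
      constructor
      · rintro ⟨h1, h2, h3⟩
        have : cLt F j.val ≤ cLt F (p : ℕ) := by
          apply cLt_mono
          rw [Fin.lt_def] at h2
          omega
        exact ⟨h1, h2, by omega⟩
      · rintro ⟨h1, h2, h3⟩
        exact ⟨h1, h2, by omega⟩
    rw [e1, e2] at hsplit
    have e3 : Smm m (cLt F (p : ℕ))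
        = (F.filter (fun j => cLt F j.val < cLt F (p : ℕ))).card := Smm_psiM ha hile
    have e4 := val_eq_cLt_add F p
    omega
  ext p
  by_cases hp : p ∈ F
  · simp only [hp, iff_true]
    have hile : cLt F (p : ℕ) ≤ r := cLt_le_r hF _
    have hmain := main p
    rcases Nat.lt_or_ge (cLt F (p : ℕ)) r with hir | hir
    · have hik : cLt F (p : ℕ) < r + a := by omega
      have hmi := psiM_apply_lt (F := F) hir hik
      rw [← hm] at hmi
      have hT : (F.filter (fun j => j < p ∧ cLt F j.val = cLt F (p : ℕ))).card
          < (F.filter (fun j => cLt F j.val = cLt F (p : ℕ))).card := by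
        apply Finset.card_lt_card
        constructor
        · intro j hj
          rw [Finset.mem_filter] at hj ⊢
          exact ⟨hj.1, hj.2.2⟩
        · intro hsub
          have hpin : p ∈ F.filter (fun j => cLt F j.val = cLt F (p : ℕ)) := by
            rw [Finset.mem_filter]; exact ⟨hp, rfl⟩
          have := hsub hpin
          rw [Finset.mem_filter] at this
          exact absurd this.2.1 (lt_irrefl p)
      apply mem_phiM_of_interval hir
      · omega
      · rw [Smm_succ m hik]
        omega
    · have hmain := main p
      rw [mem_phiM_iff m p]
      right
      rw [degM_eq_Smm hsupp le_rfl]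
      have hieq : cLt F (p : ℕ) = r := by omega
      rw [hieq] at hmain
      omega
  · simp only [hp, iff_false]
    have hir : cLt F (p : ℕ) < r := cLt_lt_r_of_not_mem hF hp
    have hik : cLt F (p : ℕ) < r + a := by omega
    have hmi := psiM_apply_lt (F := F) hir hik
    rw [← hm] at hmi
    have hT : F.filter (fun j => j < p ∧ cLt F j.val = cLt F (p : ℕ))
        = F.filter (fun j => cLt F j.val = cLt F (p : ℕ)) := by
      ext j
      simp only [Finset.mem_filter]
      refine ⟨fun h => ⟨h.1, h.2.2⟩, fun h => ⟨h.1, ?_, h.2⟩⟩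
      rcases lt_trichotomy j p with hc | hc | hc
      · exact hc
      · exact absurd (hc ▸ h.1) hp
      · exfalso
        have h1 : cLt F ((p : ℕ) + 1) = cLt F (p : ℕ) + 1 := by
          rw [cLt_succ F p.isLt]
          simp only [Fin.eta]
          rw [if_neg hp]
        have h2 : (p : ℕ) + 1 ≤ (j : ℕ) := by rw [Fin.lt_def] at hc; omega
        have := cLt_mono F h2
        omega
    have hmain := main p
    apply ePos_not_mem hdeg hir
    unfold ePos
    rw [Smm_succ m hik]
    rw [hT] at hmain
    omega

end PhiPsi

section Exchange

lemma card_filter_or_single {k : ℕ} (P Q : Fin k → Prop) [DecidablePred P] [DecidablePred Q]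
    (c : Fin k) (hc : ¬ Q c) :
    (Finset.univ.filter (fun j => P j ∧ (Q j ∨ j = c))).card
      = (Finset.univ.filter (fun j => P j ∧ Q j)).card + (if P c then 1 else 0) := by
  have hsplit : Finset.univ.filter (fun j => P j ∧ (Q j ∨ j = c))
      = Finset.univ.filter (fun j => P j ∧ Q j) ∪ Finset.univ.filter (fun j => P j ∧ j = c) := by
    ext j
    simp only [Finset.mem_filter, Finset.mem_univ, true_and, Finset.mem_union]
    tauto
  have hdisj : Disjoint (Finset.univ.filter (fun j => P j ∧ Q j))
      (Finset.univ.filter (fun j => P j ∧ j = c)) := by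
    rw [Finset.disjoint_left]
    intro j h1 h2
    simp only [Finset.mem_filter, Finset.mem_univ, true_and] at h1 h2
    exact hc (h2.2 ▸ h1.2)
  rw [hsplit, Finset.card_union_of_disjoint hdisj]
  congr 1
  by_cases hP : P c
  · rw [show Finset.univ.filter (fun j => P j ∧ j = c) = {c} by
      ext j
      simp only [Finset.mem_filter, Finset.mem_univ, true_and, Finset.mem_singleton]
      constructor
      · exact fun h => h.2
      · rintro rfl; exact ⟨hP, rfl⟩]
    simp [hP]
  · rw [show Finset.univ.filter (fun j => P j ∧ j = c) = ∅ by
      ext j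
      simp only [Finset.mem_filter, Finset.mem_univ, true_and, Finset.notMem_empty,
        iff_false, not_and]
      rintro h rfl; exact hP h]
    simp [hP]

lemma cLt_exchange {k : ℕ} {F : Finset (Fin k)} {u v : Fin k} (hu : u ∈ F) (hv : v ∉ F)
    (x : ℕ) :
    cLt (insert v (F.erase u)) x + (if (v : ℕ) < x then 1 else 0)
      = cLt F x + (if (u : ℕ) < x then 1 else 0) := by
  have huv : u ≠ v := fun h => hv (h ▸ hu)
  have hvF2 : v ∈ insert v (F.erase u) := Finset.mem_insert_self _ _
  have h1 := card_filter_or_single (fun j : Fin k => (j : ℕ) < x)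
    (fun j => j ∉ insert v (F.erase u)) v (by simpa using hvF2)
  have h2 := card_filter_or_single (fun j : Fin k => (j : ℕ) < x)
    (fun j => j ∉ F) u (by simpa using hu)
  have heqv : ∀ j : Fin k, (j ∉ insert v (F.erase u) ∨ j = v) ↔ (j ∉ F ∨ j = u) := by
    intro j
    constructor
    · rintro (hnot | rfl)
      · by_cases hju : j = u
        · exact Or.inr hju
        · exact Or.inl (fun hjF =>
            hnot (Finset.mem_insert_of_mem (Finset.mem_erase.2 ⟨hju, hjF⟩)))
      · exact Or.inl hv
    · rintro (hnF | rfl)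
      · by_cases hjv : j = v
        · exact Or.inr hjv
        · refine Or.inl (fun hc => ?_)
          rcases Finset.mem_insert.1 hc with h | h
          · exact hjv h
          · exact hnF (Finset.mem_of_mem_erase h)
      · refine Or.inl (fun hc => ?_)
        rcases Finset.mem_insert.1 hc with h | h
        · exact huv h
        · exact (Finset.mem_erase.1 h).1 rfl
  have hfe : Finset.univ.filter (fun j : Fin k => (j : ℕ) < x ∧ (j ∉ insert v (F.erase u) ∨ j = v))
      = Finset.univ.filter (fun j : Fin k => (j : ℕ) < x ∧ (j ∉ F ∨ j = u)) := by
    ext j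
    simp only [Finset.mem_filter, Finset.mem_univ, true_and]
    rw [heqv j]
  rw [hfe] at h1
  unfold cLt
  omega

lemma cLt_exchange_le {k : ℕ} {F : Finset (Fin k)} {u v : Fin k} (hu : u ∈ F) (hv : v ∉ F)
    (huv : u < v) (x : ℕ) : cLt F x ≤ cLt (insert v (F.erase u)) x := by
  have h := cLt_exchange hu hv x
  rw [Fin.lt_def] at huv
  split_ifs at h <;> omega

lemma cLt_zero {k : ℕ} (F : Finset (Fin k)) : cLt F 0 = 0 := by
  unfold cLt
  rw [Finset.card_eq_zero]
  ext j
  simp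

/-- A shifted family is downward closed under the path order (east-count domination). -/
lemma shifted_family_downclosed {k aa : ℕ} {A : Set (Finset (Fin k))}
    (hA : ShiftedCplx A) :
    ∀ N : ℕ, ∀ F F' : Finset (Fin k), F ∈ A → F.card = aa → F'.card = aa →
      (∀ x, cLt F x ≤ cLt F' x) →
      (∑ x ∈ Finset.range (k+1), (cLt F' x - cLt F x)) = N → F' ∈ A := by
  intro N
  induction N using Nat.strong_induction_on with
  | _ N ih =>
  intro F F' hF hcF hcF' hle hN
  by_cases hex : ∃ x, cLt F x < cLt F' x
  case neg =>
    have heq : ∀ x, cLt F x = cLt F' x := by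
      push_neg at hex
      exact fun x => le_antisymm (hle x) (hex x)
    have : F = F' := by
      ext j
      have h1 := cLt_succ F j.isLt
      have h2 := cLt_succ F' j.isLt
      simp only [Fin.eta] at h1 h2
      have e1 := heq (j : ℕ)
      have e2 := heq ((j : ℕ) + 1)
      by_cases hj : j ∈ F <;> by_cases hj' : j ∈ F'
      · simp [hj, hj']
      · rw [if_pos hj] at h1; rw [if_neg hj'] at h2; omega
      · rw [if_neg hj] at h1; rw [if_pos hj'] at h2; omega
      · simp [hj, hj']
    exact this ▸ hF
  case pos =>
  have h0 := Nat.find_spec hex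
  have hmin : ∀ z, z < Nat.find hex → cLt F z = cLt F' z := by
    intro z hz
    exact le_antisymm (hle z) (not_lt.1 (Nat.find_min hex hz))
  have hx₀pos : 0 < Nat.find hex := by
    rcases Nat.eq_zero_or_pos (Nat.find hex) with h | h
    · rw [h] at h0; rw [cLt_zero, cLt_zero] at h0; omega
    · exact h
  obtain ⟨y, hx₀⟩ : ∃ y, Nat.find hex = y + 1 := ⟨Nat.find hex - 1, by omega⟩
  rw [hx₀] at h0
  have hminy : ∀ z, z ≤ y → cLt F z = cLt F' z := fun z hz => hmin z (by omega)
  have hy : y < k := by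
    by_contra hc
    rw [cLt_succ_of_ge F (by omega), cLt_succ_of_ge F' (by omega)] at h0
    exact absurd (hminy y (by omega)) (ne_of_lt h0)
  obtain ⟨u, huy⟩ : ∃ u : Fin k, (u : ℕ) = y := ⟨⟨y, hy⟩, rfl⟩
  have hu_eq : (⟨y, hy⟩ : Fin k) = u := Fin.ext (by rw [huy])
  have h1 := cLt_succ F hy
  have h2 := cLt_succ F' hy
  rw [hu_eq] at h1 h2
  have hEy := hminy y le_rfl
  have hu : u ∈ F := by
    by_contra hc
    rw [if_neg hc] at h1
    split_ifs at h2 <;> omega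
  have hu' : u ∉ F' := by
    intro hc
    rw [if_pos hc] at h2
    split_ifs at h1 <;> omega
  rw [if_pos hu] at h1
  rw [if_neg hu'] at h2
  -- existence of a non-member of F above y
  have hW : ∃ w : Fin k, y < (w : ℕ) ∧ w ∉ F := by
    by_contra hc
    push_neg at hc
    have hsub : Finset.univ.filter (fun j : Fin k => (j : ℕ) < k ∧ j ∉ F)
        ⊆ Finset.univ.filter (fun j : Fin k => (j : ℕ) < y + 1 ∧ j ∉ F) := by
      intro j hj
      rw [Finset.mem_filter] at hj ⊢
      refine ⟨Finset.mem_univ _, ?_, hj.2.2⟩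
      have := hc j
      by_contra hc2
      exact hj.2.2 (this (by omega))
    have hkk : cLt F k ≤ cLt F (y + 1) := Finset.card_le_card hsub
    have ha1 : cLt F' k = cLt F k := by
      rw [cLt_k, cLt_k, hcF, hcF']
    have ha2 : cLt F' (y + 1) ≤ cLt F' k := cLt_mono F' (by omega)
    omega
  have hWne : (Finset.univ.filter (fun w : Fin k => y < (w : ℕ) ∧ w ∉ F)).Nonempty := by
    obtain ⟨w, hw1, hw2⟩ := hW
    exact ⟨w, by rw [Finset.mem_filter]; exact ⟨Finset.mem_univ _, hw1, hw2⟩⟩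
  obtain ⟨v, hvdef⟩ :
      ∃ v : Fin k, v = (Finset.univ.filter (fun w : Fin k => y < (w : ℕ) ∧ w ∉ F)).min' hWne :=
    ⟨_, rfl⟩
  have hvW := Finset.min'_mem _ hWne
  rw [← hvdef, Finset.mem_filter] at hvW
  have hv_gt : y < (v : ℕ) := hvW.2.1
  have hv : v ∉ F := hvW.2.2
  have huv : u < v := by rw [Fin.lt_def, huy]; exact hv_gt
  obtain ⟨F₂, hF₂def⟩ : ∃ F₂ : Finset (Fin k), F₂ = insert v (F.erase u) := ⟨_, rfl⟩
  have hF₂ : F₂ ∈ A := hF₂def ▸ hA F hF u v huv hu hv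
  have hcF₂ : F₂.card = aa := by
    rw [hF₂def, Finset.card_insert_of_notMem (fun hc => hv (Finset.mem_of_mem_erase hc)),
      Finset.card_erase_of_mem hu, hcF]
    have : 0 < aa := by
      rw [← hcF]
      exact Finset.card_pos.2 ⟨u, hu⟩
    omega
  -- F stays constant between y+1 and v
  have hconst : ∀ x, y + 1 ≤ x → x ≤ (v : ℕ) → cLt F x = cLt F (y + 1) := by
    intro x hx1 hx2
    refine le_antisymm ?_ (cLt_mono F hx1)
    apply Finset.card_le_card
    intro j hj
    rw [Finset.mem_filter] at hj ⊢
    refine ⟨Finset.mem_univ _, ?_, hj.2.2⟩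
    by_contra hc
    have hjW : j ∈ Finset.univ.filter (fun w : Fin k => y < (w : ℕ) ∧ w ∉ F) := by
      rw [Finset.mem_filter]
      exact ⟨Finset.mem_univ _, by omega, hj.2.2⟩
    have h5 := Finset.min'_le _ j hjW
    rw [← hvdef] at h5
    have h6 : (v : ℕ) ≤ (j : ℕ) := h5
    omega
  have hkey : ∀ x, cLt F₂ x ≤ cLt F' x := by
    intro x
    have hid := cLt_exchange hu hv x
    rw [← hF₂def] at hid
    by_cases hux : (u : ℕ) < x
    · by_cases hvx : (v : ℕ) < x
      · have := hle x
        rw [if_pos hux, if_pos hvx] at hid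
        omega
      · have hc1 : cLt F x = cLt F (y + 1) := hconst x (by omega) (by omega)
        have hc2 : cLt F' (y + 1) ≤ cLt F' x := cLt_mono F' (by omega)
        rw [if_pos hux, if_neg hvx] at hid
        omega
    · have := hle x
      have hvx : ¬ (v : ℕ) < x := by omega
      rw [if_neg hux, if_neg hvx] at hid
      omega
  have hmono2 : ∀ x, cLt F x ≤ cLt F₂ x := by
    intro x
    have := cLt_exchange_le hu hv huv x
    rw [← hF₂def] at this
    exact this
  have hstrict : cLt F (y+1) < cLt F₂ (y+1) := by
    have hid := cLt_exchange hu hv (y + 1)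
    rw [← hF₂def] at hid
    rw [if_pos (show (u : ℕ) < y + 1 by omega), if_neg (show ¬ (v : ℕ) < y + 1 by omega)] at hid
    omega
  have hlt : (∑ x ∈ Finset.range (k+1), (cLt F' x - cLt F₂ x)) < N := by
    rw [← hN]
    apply Finset.sum_lt_sum
    · intro x _
      have := hmono2 x
      have := hkey x
      have := hle x
      omega
    · refine ⟨y + 1, Finset.mem_range.2 (by omega), ?_⟩
      have := hkey (y + 1)
      omega
  exact ih _ hlt F₂ F' hF₂ hcF₂ hcF' hkey rfl

end Exchange

section MCEngine

lemma Smm_dec_low {k : ℕ} (m : Fin k → ℕ) (c : Fin k) {i : ℕ} (h : i ≤ (c : ℕ)) :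
    Smm (fun x => if x = c then m x - 1 else m x) i = Smm m i := by
  apply Finset.sum_congr rfl
  intro x hx
  rw [Finset.mem_filter] at hx
  show (if x = c then m x - 1 else m x) = m x
  rw [if_neg (fun hc => by subst hc; omega)]

lemma Smm_inc_low {k : ℕ} (m : Fin k → ℕ) (c : Fin k) {i : ℕ} (h : i ≤ (c : ℕ)) :
    Smm (fun x => if x = c then m x + 1 else m x) i = Smm m i := by
  apply Finset.sum_congr rfl
  intro x hx
  rw [Finset.mem_filter] at hx
  show (if x = c then m x + 1 else m x) = m x
  rw [if_neg (fun hc => by subst hc; omega)]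

lemma Smm_dec_high {k : ℕ} (m : Fin k → ℕ) (c : Fin k) (hc : 0 < m c) {i : ℕ}
    (h : (c : ℕ) < i) :
    Smm (fun x => if x = c then m x - 1 else m x) i + 1 = Smm m i := by
  unfold Smm
  have hcf : c ∈ Finset.univ.filter (fun j : Fin k => (j : ℕ) < i) := by
    rw [Finset.mem_filter]; exact ⟨Finset.mem_univ _, h⟩
  rw [← Finset.sum_erase_add _ (fun x => m x) hcf,
    ← Finset.sum_erase_add _ (fun x => if x = c then m x - 1 else m x) hcf]
  rw [Finset.sum_congr rfl (fun x hx =>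
    (show (if x = c then m x - 1 else m x) = m x from
      if_neg (Finset.ne_of_mem_erase hx)))]
  rw [show (if c = c then m c - 1 else m c) = m c - 1 from if_pos rfl]
  have he : (∑ x ∈ (Finset.univ.filter (fun j : Fin k => (j : ℕ) < i)).erase c, m x)
      = ((Finset.univ.filter (fun j : Fin k => (j : ℕ) < i)).erase c).sum m := rfl
  omega

lemma Smm_inc_high {k : ℕ} (m : Fin k → ℕ) (c : Fin k) {i : ℕ} (h : (c : ℕ) < i) :
    Smm (fun x => if x = c then m x + 1 else m x) i = Smm m i + 1 := by
  unfold Smm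
  have hcf : c ∈ Finset.univ.filter (fun j : Fin k => (j : ℕ) < i) := by
    rw [Finset.mem_filter]; exact ⟨Finset.mem_univ _, h⟩
  rw [← Finset.sum_erase_add _ (fun x => m x) hcf,
    ← Finset.sum_erase_add _ (fun x => if x = c then m x + 1 else m x) hcf]
  rw [Finset.sum_congr rfl (fun x hx =>
    (show (if x = c then m x + 1 else m x) = m x from
      if_neg (Finset.ne_of_mem_erase hx)))]
  rw [show (if c = c then m c + 1 else m c) = m c + 1 from if_pos rfl]
  have he : (∑ x ∈ (Finset.univ.filter (fun j : Fin k => (j : ℕ) < i)).erase c, m x)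
      = ((Finset.univ.filter (fun j : Fin k => (j : ℕ) < i)).erase c).sum m := rfl
  omega

lemma shiftMove_decomp {k : ℕ} (m : Fin k → ℕ) {c d : Fin k} (hcd : c ≠ d) :
    shiftMove m c d
      = (fun x => if x = d then (fun y => if y = c then m y - 1 else m y) x + 1
          else (fun y => if y = c then m y - 1 else m y) x) := by
  funext x
  unfold shiftMove
  by_cases hxc : x = c
  · subst hxc
    simp [hcd]
  · by_cases hxd : x = d
    · subst hxd
      simp [hxc]
    · simp [hxc, hxd]

lemma Smm_shift_low {k : ℕ} (m : Fin k → ℕ) {c d : Fin k} (hcd : c < d) {i : ℕ}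
    (h : i ≤ (c : ℕ)) : Smm (shiftMove m c d) i = Smm m i := by
  rw [shiftMove_decomp m (ne_of_lt hcd)]
  rw [Fin.lt_def] at hcd
  rw [Smm_inc_low _ d (by omega), Smm_dec_low m c h]

lemma Smm_shift_mid {k : ℕ} (m : Fin k → ℕ) {c d : Fin k} (hcd : c < d) (hc : 0 < m c)
    {i : ℕ} (h1 : (c : ℕ) < i) (h2 : i ≤ (d : ℕ)) :
    Smm (shiftMove m c d) i + 1 = Smm m i := by
  rw [shiftMove_decomp m (ne_of_lt hcd)]
  rw [Smm_inc_low _ d h2, Smm_dec_high m c hc h1]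

lemma Smm_shift_high {k : ℕ} (m : Fin k → ℕ) {c d : Fin k} (hcd : c < d) (hc : 0 < m c)
    {i : ℕ} (h : (d : ℕ) < i) :
    Smm (shiftMove m c d) i = Smm m i := by
  rw [shiftMove_decomp m (ne_of_lt hcd)]
  rw [Fin.lt_def] at hcd
  rw [Smm_inc_high _ d h]
  have := Smm_dec_high m c hc (show (c : ℕ) < i by omega)
  omega

/-- A shifted multicomplex is downward closed under partial-sum domination. -/
lemma shifted_mc_downclosed {r a : ℕ} {M : Set (Fin (r+a) → ℕ)}
    (hM1 : ∀ m ∈ M, SupportedOn r m ∧ degM m ≤ a) (hM2 : IsMulticx M)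
    (hM3 : ShiftedMC r M) (hr : 0 < r) :
    ∀ N : ℕ, ∀ m m' : Fin (r+a) → ℕ, m ∈ M → SupportedOn r m' →
      (∀ i, i ≤ r → Smm m' i ≤ Smm m i) →
      (∑ i ∈ Finset.range (r+1), (Smm m i - Smm m' i)) = N → m' ∈ M := by
  intro N
  induction N using Nat.strong_induction_on with
  | _ N ih =>
  intro m m' hm hs' hle hN
  have hs : SupportedOn r m := (hM1 m hm).1
  by_cases hex : ∃ i, i ≤ r ∧ Smm m' i < Smm m i
  case neg =>
    have heq : ∀ i, i ≤ r → Smm m' i = Smm m i := by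
      push_neg at hex
      exact fun i hi => le_antisymm (hle i hi) (hex i hi)
    have : m' = m := by
      funext x
      by_cases hxr : (x : ℕ) < r
      · have h1 : Smm m ((x : ℕ) + 1) = Smm m (x : ℕ) + m ⟨(x : ℕ), x.isLt⟩ :=
          Smm_succ m x.isLt
        have h2 : Smm m' ((x : ℕ) + 1) = Smm m' (x : ℕ) + m' ⟨(x : ℕ), x.isLt⟩ :=
          Smm_succ m' x.isLt
        simp only [Fin.eta] at h1 h2
        have e1 := heq (x : ℕ) (by omega)
        have e2 := heq ((x : ℕ) + 1) (by omega)
        omega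
      · rw [hs' x (by omega), hs x (by omega)]
    exact this ▸ hm
  case pos =>
  have hfind := Nat.find_spec hex
  have hmin : ∀ z, z < Nat.find hex → ¬ (z ≤ r ∧ Smm m' z < Smm m z) :=
    fun z hz => Nat.find_min hex hz
  obtain ⟨i₀, hi₀⟩ : ∃ i₀, Nat.find hex = i₀ := ⟨_, rfl⟩
  rw [hi₀] at hfind hmin
  obtain ⟨hi₀r, hi₀lt⟩ := hfind
  have hi₀pos : 0 < i₀ := by
    rcases Nat.eq_zero_or_pos i₀ with h | h
    · rw [h, Smm_zero, Smm_zero] at hi₀lt; omega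
    · exact h
  obtain ⟨t, rfl⟩ : ∃ t, i₀ = t + 1 := ⟨i₀ - 1, by omega⟩
  have htr : t < r := by omega
  have htk : t < r + a := by omega
  have hSt : Smm m' t = Smm m t := by
    have := hmin t (by omega)
    have := hle t (by omega)
    omega
  have h1 : Smm m (t + 1) = Smm m t + m ⟨t, htk⟩ := Smm_succ m htk
  have h2 : Smm m' (t + 1) = Smm m' t + m' ⟨t, htk⟩ := Smm_succ m' htk
  have hmt : 0 < m ⟨t, htk⟩ := by omega
  by_cases hj : ∃ i, t + 1 < i ∧ i ≤ r ∧ Smm m' i = Smm m i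
  case pos =>
    have hjfind := Nat.find_spec hj
    have hjmin : ∀ z, z < Nat.find hj → ¬ (t + 1 < z ∧ z ≤ r ∧ Smm m' z = Smm m z) :=
      fun z hz => Nat.find_min hj hz
    obtain ⟨j₀, hj₀⟩ : ∃ j₀, Nat.find hj = j₀ := ⟨_, rfl⟩
    rw [hj₀] at hjfind hjmin
    obtain ⟨hj₀gt, hj₀r, hj₀eq⟩ := hjfind
    have hustrict : ∀ i, t + 1 ≤ i → i ≤ j₀ - 1 → Smm m' i < Smm m i := by
      intro i hi1 hi2
      rcases Nat.eq_or_lt_of_le hi1 with h | h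
      · exact h ▸ hi₀lt
      · have hne := hjmin i (by omega)
        have := hle i (by omega)
        omega
    have huk : j₀ - 1 < r + a := by omega
    obtain ⟨c, hc_def⟩ : ∃ c : Fin (r+a), c = ⟨t, htk⟩ := ⟨_, rfl⟩
    obtain ⟨d, hd_def⟩ : ∃ d : Fin (r+a), d = ⟨j₀ - 1, huk⟩ := ⟨_, rfl⟩
    have hcv : (c : ℕ) = t := by rw [hc_def]
    have hdv : (d : ℕ) = j₀ - 1 := by rw [hd_def]
    rw [← hc_def] at h1 h2 hmt
    have hcd : c < d := by rw [Fin.lt_def, hcv, hdv]; omega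
    have hm₂ : shiftMove m c d ∈ M := hM3 m hm c d hcd (by rw [hdv]; omega) hmt
    have hle₂ : ∀ i, i ≤ r → Smm m' i ≤ Smm (shiftMove m c d) i := by
      intro i hi
      rcases Nat.lt_or_ge (c : ℕ) i with hc1 | hc1
      · rcases le_or_gt i (d : ℕ) with hc2 | hc2
        · have := Smm_shift_mid m hcd hmt hc1 hc2
          have := hustrict i (by omega) (by omega)
          omega
        · rw [Smm_shift_high m hcd hmt hc2]
          exact hle i hi
      · rw [Smm_shift_low m hcd hc1]
        exact hle i hi
    have hmeas : (∑ i ∈ Finset.range (r+1), (Smm (shiftMove m c d) i - Smm m' i)) < N := by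
      rw [← hN]
      apply Finset.sum_lt_sum
      · intro i hi
        rw [Finset.mem_range] at hi
        rcases Nat.lt_or_ge (c : ℕ) i with hc1 | hc1
        · rcases le_or_gt i (d : ℕ) with hc2 | hc2
          · have := Smm_shift_mid m hcd hmt hc1 hc2
            have := hle₂ i (by omega)
            omega
          · rw [Smm_shift_high m hcd hmt hc2]
        · rw [Smm_shift_low m hcd hc1]
      · refine ⟨t + 1, Finset.mem_range.2 (by omega), ?_⟩
        have := Smm_shift_mid m hcd hmt (show (c : ℕ) < t + 1 by omega)
          (show t + 1 ≤ (d : ℕ) by rw [hdv]; omega)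
        have := hle₂ (t + 1) (by omega)
        omega
    exact ih _ hmeas (shiftMove m c d) m' hm₂ hs' hle₂ rfl
  case neg =>
    push_neg at hj
    have hstrict : ∀ i, t + 1 ≤ i → i ≤ r → Smm m' i < Smm m i := by
      intro i hi1 hi2
      rcases Nat.eq_or_lt_of_le hi1 with h | h
      · exact h ▸ hi₀lt
      · have := hj i (by omega) hi2
        have := hle i hi2
        omega
    obtain ⟨c, hc_def⟩ : ∃ c : Fin (r+a), c = ⟨t, htk⟩ := ⟨_, rfl⟩
    have hcv : (c : ℕ) = t := by rw [hc_def]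
    rw [← hc_def] at h1 h2 hmt
    have hm₂ : (fun x => if x = c then m x - 1 else m x) ∈ M := by
      apply hM2 m hm
      intro x
      by_cases hx : x = c
      · rw [if_pos hx]; omega
      · rw [if_neg hx]
    have hle₂ : ∀ i, i ≤ r → Smm m' i ≤ Smm (fun x => if x = c then m x - 1 else m x) i := by
      intro i hi
      rcases Nat.lt_or_ge (c : ℕ) i with hc1 | hc1
      · have := Smm_dec_high m c hmt hc1
        have := hstrict i (by omega) hi
        omega
      · rw [Smm_dec_low m c hc1]
        exact hle i hi
    have hmeas : (∑ i ∈ Finset.range (r+1),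
        (Smm (fun x => if x = c then m x - 1 else m x) i - Smm m' i)) < N := by
      rw [← hN]
      apply Finset.sum_lt_sum
      · intro i hi
        rcases Nat.lt_or_ge (c : ℕ) i with hc1 | hc1
        · have := Smm_dec_high m c hmt hc1
          have := hle₂ i (by rw [Finset.mem_range] at hi; omega)
          omega
        · rw [Smm_dec_low m c hc1]
      · refine ⟨t + 1, Finset.mem_range.2 (by omega), ?_⟩
        have := Smm_dec_high m c hmt (show (c : ℕ) < t + 1 by omega)
        have := hle₂ (t + 1) (by omega)
        omega
    exact ih _ hmeas _ m' hm₂ hs' hle₂ rfl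

end MCEngine

section Main

variable {r a : ℕ}

/-- `Φ̄ ∘ Ψ̄ = id` on families of `a`-subsets. -/
lemma phi_psi_image (hr : 0 < r) (ha : 0 < a) {A : Set (Finset (Fin (r+a)))}
    (hAcard : ∀ F ∈ A, F.card = a) : phiM r '' (psiM r '' A) = A := by
  ext F
  constructor
  · rintro ⟨m, ⟨G, hG, rfl⟩, rfl⟩
    rw [phiM_psiM hr ha (hAcard G hG)]
    exact hG
  · intro hF
    exact ⟨psiM r F, ⟨F, hF, rfl⟩, phiM_psiM hr ha (hAcard F hF)⟩

/-- `Ψ̄(A)` is a shifted multicomplex with the right support and degree bounds. -/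
lemma psi_image_good (hr : 0 < r) (ha : 0 < a) {A : Set (Finset (Fin (r+a)))}
    (hAcard : ∀ F ∈ A, F.card = a) (hAshift : ShiftedCplx A) :
    (∀ m ∈ psiM r '' A, SupportedOn r m ∧ degM m ≤ a) ∧
      IsMulticx (psiM r '' A) ∧ ShiftedMC r (psiM r '' A) := by
  refine ⟨?_, ?_, ?_⟩
  · rintro p ⟨G, hG, rfl⟩
    exact ⟨psiM_supported G, degM_psiM_le ha (hAcard G hG)⟩
  · rintro p ⟨G, hG, rfl⟩ m' hm'
    have hs0 : SupportedOn r (psiM r G) := psiM_supported G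
    have hd0 : degM (psiM r G) ≤ a := degM_psiM_le ha (hAcard G hG)
    have hs' : SupportedOn r m' := by
      intro i hi
      have := hm' i
      rw [hs0 i hi] at this
      omega
    have hd' : degM m' ≤ a := by
      have h1 : degM m' ≤ degM (psiM r G) := by
        unfold degM
        exact Finset.sum_le_sum (fun i _ => hm' i)
      omega
    have hGeq : phiM r (psiM r G) = G := phiM_psiM hr ha (hAcard G hG)
    have hcard' : (phiM r m').card = a := card_phiM hs' hd' hr
    have hle : ∀ x, cLt G x ≤ cLt (phiM r m') x := by
      intro x
      rw [← hGeq]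
      exact cLt_phiM_le_of_Smm hs0 hd0 hs' hd' hr (fun i _ => Smm_le_of_le hm' i) x
    have hmemA : phiM r m' ∈ A :=
      shifted_family_downclosed hAshift _ G (phiM r m') hG (hAcard G hG) hcard' hle rfl
    exact ⟨phiM r m', hmemA, psiM_phiM hs' hd' hr⟩
  · rintro p ⟨G, hG, rfl⟩ c d hcd hdr hc
    have hs0 : SupportedOn r (psiM r G) := psiM_supported G
    have hd0 : degM (psiM r G) ≤ a := degM_psiM_le ha (hAcard G hG)
    have hs' : SupportedOn r (shiftMove (psiM r G) c d) := by
      intro i hi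
      have hic : i ≠ c := by
        intro h
        subst h
        rw [Fin.lt_def] at hcd
        omega
      have hid : i ≠ d := by
        intro h
        subst h
        omega
      unfold shiftMove
      rw [if_neg hic, if_neg hid]
      exact hs0 i hi
    have hd' : degM (shiftMove (psiM r G) c d) ≤ a := by
      rw [degM_eq_Smm hs' le_rfl, Smm_shift_high (psiM r G) hcd hc hdr,
        ← degM_eq_Smm hs0 le_rfl]
      exact hd0
    have hle : ∀ i, i ≤ r → Smm (shiftMove (psiM r G) c d) i ≤ Smm (psiM r G) i := by
      intro i hi
      rcases le_or_gt i (c : ℕ) with h | h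
      · rw [Smm_shift_low _ hcd h]
      · rcases le_or_gt i (d : ℕ) with h2 | h2
        · have := Smm_shift_mid (psiM r G) hcd hc h h2
          omega
        · rw [Smm_shift_high _ hcd hc h2]
    have hGeq : phiM r (psiM r G) = G := phiM_psiM hr ha (hAcard G hG)
    have hcard' : (phiM r (shiftMove (psiM r G) c d)).card = a := card_phiM hs' hd' hr
    have hlec : ∀ x, cLt G x ≤ cLt (phiM r (shiftMove (psiM r G) c d)) x := by
      intro x
      conv_lhs => rw [← hGeq]
      exact cLt_phiM_le_of_Smm hs0 hd0 hs' hd' hr hle x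
    have hmemA : phiM r (shiftMove (psiM r G) c d) ∈ A :=
      shifted_family_downclosed hAshift _ G _ hG (hAcard G hG) hcard' hlec rfl
    exact ⟨_, hmemA, psiM_phiM hs' hd' hr⟩

end Main

/-- (Proposition 3.3(a), BFS correspondence) `M ↦ φ̄(M) = {φ^a(m) : m ∈ M}`
is a bijection from shifted multicomplexes on `W_r` of degree `≤ a` onto shifted families of
`a`-subsets of `[r+a]`, with inverse `𝒜 ↦ {ψ(F) : F ∈ 𝒜}`. -/
theorem phi_bijection_shiftedMulticomplexes_shiftedFamilies (r a : ℕ) (hr : 0 < r) (ha : 0 < a) :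
    Set.BijOn (fun M : Set (Fin (r + a) → ℕ) => phiM r '' M)
      {M : Set (Fin (r + a) → ℕ) |
        (∀ m ∈ M, SupportedOn r m ∧ degM m ≤ a) ∧ IsMulticx M ∧ ShiftedMC r M}
      {A : Set (Finset (Fin (r + a))) | (∀ F ∈ A, F.card = a) ∧ ShiftedCplx A} ∧
    Set.InvOn (fun A : Set (Finset (Fin (r + a))) => psiM r '' A)
      (fun M : Set (Fin (r + a) → ℕ) => phiM r '' M)
      {M : Set (Fin (r + a) → ℕ) |
        (∀ m ∈ M, SupportedOn r m ∧ degM m ≤ a) ∧ IsMulticx M ∧ ShiftedMC r M}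
      {A : Set (Finset (Fin (r + a))) | (∀ F ∈ A, F.card = a) ∧ ShiftedCplx A} := by
  have hMaps : ∀ M : Set (Fin (r + a) → ℕ),
      ((∀ m ∈ M, SupportedOn r m ∧ degM m ≤ a) ∧ IsMulticx M ∧ ShiftedMC r M) →
      ((∀ F ∈ phiM r '' M, F.card = a) ∧ ShiftedCplx (phiM r '' M)) := by
    rintro M ⟨hM1, hM2, hM3⟩
    constructor
    · rintro F ⟨m, hm, rfl⟩
      exact card_phiM (hM1 m hm).1 (hM1 m hm).2 hr
    · rintro F ⟨m, hm, rfl⟩ u v huv hu hv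
      have hs := (hM1 m hm).1
      have hd := (hM1 m hm).2
      have hcard : (insert v ((phiM r m).erase u)).card = a := by
        rw [Finset.card_insert_of_notMem (fun hc => hv (Finset.mem_of_mem_erase hc)),
          Finset.card_erase_of_mem hu, card_phiM hs hd hr]
        omega
      have hs₂ : SupportedOn r (psiM r (insert v ((phiM r m).erase u))) := psiM_supported _
      have hd₂ : degM (psiM r (insert v ((phiM r m).erase u))) ≤ a := degM_psiM_le ha hcard
      have hphi₂ : phiM r (psiM r (insert v ((phiM r m).erase u)))
          = insert v ((phiM r m).erase u) := phiM_psiM hr ha hcard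
      have hle : ∀ i, i ≤ r →
          Smm (psiM r (insert v ((phiM r m).erase u))) i ≤ Smm m i := by
        apply Smm_le_of_cLt_phiM hs hd hs₂ hd₂ hr
        intro x
        rw [hphi₂]
        exact cLt_exchange_le hu hv huv x
      have hmem : psiM r (insert v ((phiM r m).erase u)) ∈ M :=
        shifted_mc_downclosed hM1 hM2 hM3 hr _ m _ hm hs₂ hle rfl
      exact ⟨_, hmem, hphi₂⟩
  refine ⟨⟨hMaps, ?_, ?_⟩, ?_, ?_⟩
  · -- InjOn
    rintro M₁ hM₁ M₂ hM₂ himg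
    have key : ∀ X Y : Set (Fin (r + a) → ℕ),
        ((∀ m ∈ X, SupportedOn r m ∧ degM m ≤ a) ∧ IsMulticx X ∧ ShiftedMC r X) →
        ((∀ m ∈ Y, SupportedOn r m ∧ degM m ≤ a) ∧ IsMulticx Y ∧ ShiftedMC r Y) →
        phiM r '' X = phiM r '' Y → X ⊆ Y := by
      intro X Y hX hY himg' m hm
      have himage : phiM r m ∈ phiM r '' Y := himg' ▸ Set.mem_image_of_mem _ hm
      obtain ⟨m₂, hm₂, heq⟩ := himage
      have h1 := psiM_phiM (hX.1 m hm).1 (hX.1 m hm).2 hr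
      have h2 := psiM_phiM (hY.1 m₂ hm₂).1 (hY.1 m₂ hm₂).2 hr
      have : m = m₂ := h1.symm.trans (by rw [← heq]; exact h2)
      rw [this]
      exact hm₂
    exact Set.Subset.antisymm (key M₁ M₂ hM₁ hM₂ himg) (key M₂ M₁ hM₂ hM₁ himg.symm)
  · -- SurjOn
    rintro A ⟨hAcard, hAshift⟩
    exact ⟨psiM r '' A, psi_image_good hr ha hAcard hAshift, phi_psi_image hr ha hAcard⟩
  · -- LeftInvOn
    rintro M ⟨hM1, hM2, hM3⟩
    show psiM r '' (phiM r '' M) = M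
    ext p
    constructor
    · rintro ⟨F, ⟨m, hm, rfl⟩, rfl⟩
      rw [psiM_phiM (hM1 m hm).1 (hM1 m hm).2 hr]
      exact hm
    · intro hp
      exact ⟨phiM r p, ⟨p, hp, rfl⟩, psiM_phiM (hM1 p hp).1 (hM1 p hp).2 hr⟩
  · -- RightInvOn
    rintro A ⟨hAcard, hAshift⟩
    show phiM r '' (psiM r '' A) = A
    exact phi_psi_image hr ha hAcard
end
end

section
/- Let Δ be a shifted simplicial complex of dimension d−1 on [n] with h-triangle (h_{i,j})_{0≤j≤i≤d}. Then for all 0 ≤ j ≤ i ≤ d, h_{i,j} equals the number of facets F of Δ with |F| = i and |σ(F)| = i − j. -/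
open Finset

noncomputable section

section AuxProof
open Classical

variable {n : ℕ} {Δ : Set (Finset (Fin n))}

lemma mem_sigmaSeg {F : Finset (Fin n)} {k : Fin n} :
    k ∈ sigmaSeg F ↔ ∀ l, k ≤ l → l ∈ F := by
  simp [sigmaSeg]

lemma sigmaSeg_subset (F : Finset (Fin n)) : sigmaSeg F ⊆ F := fun k hk =>
  (mem_sigmaSeg.1 hk) k le_rfl

lemma sigmaSeg_card_le (F : Finset (Fin n)) : (sigmaSeg F).card ≤ F.card :=
  Finset.card_le_card (sigmaSeg_subset F)

lemma mem_sigmaSeg_iff_card {F : Finset (Fin n)} {z : Fin n} :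
    z ∈ sigmaSeg F ↔ n - (sigmaSeg F).card ≤ (z : ℕ) := by
  rcases Finset.eq_empty_or_nonempty (sigmaSeg F) with h | h
  · simp only [h, Finset.notMem_empty, Finset.card_empty, Nat.sub_zero, false_iff, not_le]
    exact z.isLt
  · have hIci : sigmaSeg F = Finset.Ici ((sigmaSeg F).min' h) := by
      apply Finset.Subset.antisymm
      · intro z hz
        exact Finset.mem_Ici.2 (Finset.min'_le _ _ hz)
      · intro z hz
        have hm := Finset.min'_mem (sigmaSeg F) h
        exact mem_sigmaSeg.2 fun l hl =>
          mem_sigmaSeg.1 hm l (le_trans (Finset.mem_Ici.1 hz) hl)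
    have hcard : (sigmaSeg F).card = n - ((sigmaSeg F).min' h : ℕ) := by
      have := congrArg Finset.card hIci
      rw [Fin.card_Ici] at this
      exact this
    have hmlt : (((sigmaSeg F).min' h : ℕ)) < n := ((sigmaSeg F).min' h).isLt
    constructor
    · intro hz
      have := Finset.min'_le _ _ hz
      have : (((sigmaSeg F).min' h : ℕ)) ≤ (z : ℕ) := this
      omega
    · intro hz
      rw [hIci, Finset.mem_Ici]
      have : (((sigmaSeg F).min' h : ℕ)) ≤ (z : ℕ) := by omega
      exact this

lemma exists_top_face (hS : ShiftedCplx Δ) {G F' : Finset (Fin n)} (hF' : F' ∈ Δ)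
    (hGF : G ⊆ F') {c : ℕ} (hc : F'.card = c) :
    ∃ F, F ∈ Δ ∧ G ⊆ F ∧ F.card = c ∧ F \ G ⊆ sigmaSeg F := by
  classical
  set s : Finset (Finset (Fin n)) :=
    univ.filter (fun F => F ∈ Δ ∧ G ⊆ F ∧ F.card = c) with hs
  have hne : s.Nonempty := ⟨F', by simp [hs, hF', hGF, hc]⟩
  obtain ⟨F, hFs, hmax⟩ := s.exists_max_image (fun F => ∑ x ∈ F, (x : ℕ)) hne
  simp only [hs, Finset.mem_filter, Finset.mem_univ, true_and] at hFs
  obtain ⟨hFΔ, hGFm, hcF⟩ := hFs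
  refine ⟨F, hFΔ, hGFm, hcF, ?_⟩
  intro x hx
  rw [Finset.mem_sdiff] at hx
  obtain ⟨hxF, hxG⟩ := hx
  by_contra hxσ
  rw [mem_sigmaSeg] at hxσ
  push_neg at hxσ
  obtain ⟨l, hxl, hlF⟩ := hxσ
  have hxl' : x < l := lt_of_le_of_ne hxl (by rintro rfl; exact hlF hxF)
  have hF2 : insert l (F.erase x) ∈ Δ := hS F hFΔ x l hxl' hxF hlF
  have hlF' : l ∉ F.erase x := fun h => hlF (Finset.mem_of_mem_erase h)
  have hGF2 : G ⊆ insert l (F.erase x) := by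
    intro g hg
    exact Finset.mem_insert_of_mem (Finset.mem_erase.2 ⟨by rintro rfl; exact hxG hg, hGFm hg⟩)
  have hcF2 : (insert l (F.erase x)).card = c := by
    rw [Finset.card_insert_of_notMem hlF', Finset.card_erase_of_mem hxF]
    have : 1 ≤ F.card := Finset.card_pos.2 ⟨x, hxF⟩
    omega
  have hle := hmax (insert l (F.erase x))
    (Finset.mem_filter.2 ⟨Finset.mem_univ _, hF2, hGF2, hcF2⟩)
  rw [Finset.sum_insert hlF'] at hle
  have hsum : (x : ℕ) + ∑ y ∈ F.erase x, (y : ℕ) = ∑ y ∈ F, (y : ℕ) :=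
    Finset.add_sum_erase F _ hxF
  omega

lemma sdiff_seg_inj {F1 F2 S1 S2 : Finset (Fin n)} (h1 : S1 ⊆ sigmaSeg F1)
    (h2 : S2 ⊆ sigmaSeg F2) (hcard : S1.card = S2.card)
    (heq : F1 \ S1 = F2 \ S2) : S1 = S2 ∧ F1 = F2 := by
  classical
  -- symmetric subset argument
  have key : ∀ (F1 F2 S1 S2 : Finset (Fin n)), S1 ⊆ sigmaSeg F1 → S2 ⊆ sigmaSeg F2 →
      S1.card = S2.card → F1 \ S1 = F2 \ S2 → S1 ⊆ S2 := by
    intro F1 F2 S1 S2 h1 h2 hcard heq z hz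
    by_contra hz2
    have hzF1 : z ∈ F1 := sigmaSeg_subset _ (h1 hz)
    have hzG : z ∉ F1 \ S1 := by simp [Finset.mem_sdiff, hz]
    have hzF2 : z ∉ F2 := by
      intro h
      exact hz2 (by
        have : z ∉ F2 \ S2 := heq ▸ hzG
        rw [Finset.mem_sdiff] at this
        push_neg at this
        exact this h)
    set A : Finset (Fin n) := univ.filter (fun w => z ≤ w ∧ w ∉ F1 \ S1) with hA
    have hA1 : A ⊆ S1 := by
      intro w hw
      rw [hA, Finset.mem_filter] at hw
      obtain ⟨-, hzw, hwG⟩ := hw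
      have hwF1 : w ∈ F1 := mem_sigmaSeg.1 (h1 hz) w hzw
      rw [Finset.mem_sdiff] at hwG
      push_neg at hwG
      exact hwG hwF1
    have hA2 : S2 ⊆ A := by
      intro w hw
      rw [hA, Finset.mem_filter]
      refine ⟨Finset.mem_univ _, ?_, ?_⟩
      · rcases le_or_gt z w with h | h
        · exact h
        · exact absurd (mem_sigmaSeg.1 (h2 hw) z h.le) hzF2
      · rw [heq, Finset.mem_sdiff]
        push_neg
        intro _
        exact hw
    have hzA : z ∈ A := by
      rw [hA, Finset.mem_filter]
      exact ⟨Finset.mem_univ _, le_rfl, hzG⟩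
    have hss : S2 ⊂ A := ⟨hA2, fun h => hz2 (h hzA) ⟩
    have := Finset.card_lt_card hss
    have := Finset.card_le_card hA1
    omega
  have hsub1 : S1 ⊆ S2 := key F1 F2 S1 S2 h1 h2 hcard heq
  have hS12 : S1 = S2 := Finset.eq_of_subset_of_card_le hsub1 (le_of_eq hcard.symm)
  refine ⟨hS12, ?_⟩
  have e1 : F1 \ S1 ∪ S1 = F1 := Finset.sdiff_union_of_subset (h1.trans (sigmaSeg_subset _))
  have e2 : F2 \ S2 ∪ S2 = F2 := Finset.sdiff_union_of_subset (h2.trans (sigmaSeg_subset _))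
  rw [← e1, ← e2, heq, hS12]

lemma fvec_pureSkel (hS : ShiftedCplx Δ) (c i : ℕ) (hic : i ≤ c) :
    fvec (pureSkel Δ c) i =
      ∑ F ∈ univ.filter (fun F : Finset (Fin n) => F ∈ Δ ∧ F.card = c),
        ((sigmaSeg F).card.choose (c - i)) := by
  classical
  have hset : {F ∈ pureSkel Δ c | F.card = i} =
      ↑(univ.filter (fun G : Finset (Fin n) => G ∈ pureSkel Δ c ∧ G.card = i)) := by
    ext G; simp
  rw [fvec, hset, Set.ncard_coe_finset]
  have hrhs : ∑ F ∈ univ.filter (fun F : Finset (Fin n) => F ∈ Δ ∧ F.card = c),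
        ((sigmaSeg F).card.choose (c - i))
      = (((univ.filter (fun F : Finset (Fin n) => F ∈ Δ ∧ F.card = c))).sigma
          (fun F => (sigmaSeg F).powersetCard (c - i))).card := by
    rw [Finset.card_sigma]
    exact Finset.sum_congr rfl fun F _ => (Finset.card_powersetCard _ _).symm
  rw [hrhs]
  refine (Finset.card_bij (fun (a : Σ _ : Finset (Fin n), Finset (Fin n)) _ => a.1 \ a.2) ?_ ?_ ?_).symm
  · rintro ⟨F, S⟩ ha
    rw [Finset.mem_sigma, Finset.mem_filter] at ha
    obtain ⟨⟨-, hFΔ, hcF⟩, hP⟩ := ha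
    rw [Finset.mem_powersetCard] at hP
    obtain ⟨hSσ, hcS⟩ := hP
    have hSF : S ⊆ F := hSσ.trans (sigmaSeg_subset F)
    rw [Finset.mem_filter]
    refine ⟨Finset.mem_univ _, ⟨F, hFΔ, hcF, Finset.sdiff_subset⟩, ?_⟩
    rw [Finset.card_sdiff_of_subset hSF, hcF, hcS]
    omega
  · rintro ⟨F1, S1⟩ ha1 ⟨F2, S2⟩ ha2 heq
    rw [Finset.mem_sigma, Finset.mem_filter, Finset.mem_powersetCard] at ha1 ha2
    obtain ⟨⟨-, -, hcF1⟩, hS1σ, hcS1⟩ := ha1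
    obtain ⟨⟨-, -, hcF2⟩, hS2σ, hcS2⟩ := ha2
    obtain ⟨hSeq, hFeq⟩ := sdiff_seg_inj hS1σ hS2σ (by omega) heq
    subst hSeq; subst hFeq; rfl
  · intro G hG
    rw [Finset.mem_filter] at hG
    obtain ⟨-, ⟨F', hF'Δ, hcF', hGF'⟩, hcG⟩ := hG
    obtain ⟨F, hFΔ, hGF, hcF, hsd⟩ := exists_top_face hS hF'Δ hGF' hcF'
    refine ⟨⟨F, F \ G⟩, ?_, ?_⟩
    · rw [Finset.mem_sigma, Finset.mem_filter, Finset.mem_powersetCard]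
      exact ⟨⟨Finset.mem_univ _, hFΔ, hcF⟩, hsd, by rw [Finset.card_sdiff_of_subset hGF, hcF, hcG]⟩
    · simp only
      rw [Finset.sdiff_sdiff_self_left, Finset.inter_eq_right.2 hGF]

lemma binom_inv_core (a m j : ℕ) (hmj : m ≤ j) :
    ∑ k ∈ Finset.range (j+1),
        (-1 : ℤ)^k * ((a+k).choose k : ℤ) * ((a+m).choose (a+k) : ℤ)
      = if m = 0 then 1 else 0 := by
  have hprod : ∀ k : ℕ, ((a+k).choose k : ℤ) * ((a+m).choose (a+k) : ℤ)
      = ((a+m).choose a : ℤ) * (m.choose k : ℤ) := by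
    intro k
    by_cases hkm : k ≤ m
    · have hsymm : (a+k).choose k = (a+k).choose a := by
        rw [← Nat.choose_symm (Nat.le_add_right a k), Nat.add_sub_cancel_left]
      have hid := Nat.choose_mul (n := a+m) (Nat.le_add_right a k)
      rw [Nat.add_sub_cancel_left, Nat.add_sub_cancel_left] at hid
      have hnat : (a+k).choose a * (a+m).choose (a+k) = (a+m).choose a * m.choose k := by
        rw [Nat.mul_comm]; exact hid
      rw [hsymm]
      exact_mod_cast hnat
    · push_neg at hkm
      rw [Nat.choose_eq_zero_of_lt (show a+m < a+k by omega),
        Nat.choose_eq_zero_of_lt hkm]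
      simp
  have hsum : ∑ k ∈ Finset.range (j+1),
      (-1 : ℤ)^k * ((a+k).choose k : ℤ) * ((a+m).choose (a+k) : ℤ)
      = ((a+m).choose a : ℤ) * ∑ k ∈ Finset.range (j+1), (-1 : ℤ)^k * (m.choose k : ℤ) := by
    rw [Finset.mul_sum]
    refine Finset.sum_congr rfl fun k _ => ?_
    rw [mul_assoc, hprod k]
    ring
  rw [hsum]
  have hext : ∑ k ∈ Finset.range (j+1), (-1 : ℤ)^k * (m.choose k : ℤ)
      = ∑ k ∈ Finset.range (m+1), (-1 : ℤ)^k * (m.choose k : ℤ) := by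
    symm
    apply Finset.sum_subset (Finset.range_subset_range.2 (by omega))
    intro k _ hk
    rw [Finset.mem_range, not_lt] at hk
    rw [Nat.choose_eq_zero_of_lt (by omega)]
    simp
  rw [hext, Int.alternating_sum_range_choose]
  by_cases hm0 : m = 0
  · subst hm0
    simp
  · simp [hm0]

lemma binom_inv (c j s : ℕ) (hj : j ≤ c) (hs : s ≤ c) :
    ∑ i ∈ Finset.range (j+1),
        (-1 : ℤ)^(j-i) * ((c-i).choose (j-i) : ℤ) * (s.choose (c-i) : ℤ)
      = if s = c - j then 1 else 0 := by
  have hrefl := Finset.sum_range_reflect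
    (fun i => (-1 : ℤ)^(j-i) * ((c-i).choose (j-i) : ℤ) * (s.choose (c-i) : ℤ)) (j+1)
  rw [← hrefl]
  obtain ⟨a, rfl⟩ : ∃ a, c = a + j := ⟨c - j, by omega⟩
  have hterm : ∀ k ∈ Finset.range (j+1),
      (-1 : ℤ)^(j-(j+1-1-k)) * (((a+j)-(j+1-1-k)).choose (j-(j+1-1-k)) : ℤ)
        * (s.choose ((a+j)-(j+1-1-k)) : ℤ)
      = (-1 : ℤ)^k * ((a+k).choose k : ℤ) * (s.choose (a+k) : ℤ) := by
    intro k hk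
    rw [Finset.mem_range] at hk
    have h1 : j - (j+1-1-k) = k := by omega
    have h2 : (a+j) - (j+1-1-k) = a + k := by omega
    rw [h1, h2]
  rw [Finset.sum_congr rfl hterm]
  have hcj : (a+j) - j = a := by omega
  rw [hcj]
  by_cases hsa : s < a
  · have hz : ∀ k ∈ Finset.range (j+1),
        (-1 : ℤ)^k * ((a+k).choose k : ℤ) * (s.choose (a+k) : ℤ) = 0 := by
      intro k _
      rw [Nat.choose_eq_zero_of_lt (show s < a + k by omega)]
      simp
    rw [Finset.sum_congr rfl hz, Finset.sum_const_zero, if_neg (by omega)]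
  · push_neg at hsa
    obtain ⟨m, rfl⟩ : ∃ m, s = a + m := ⟨s - a, by omega⟩
    have hmj : m ≤ j := by omega
    rw [binom_inv_core a m j hmj]
    by_cases hm0 : m = 0
    · rw [if_pos hm0, if_pos (by omega)]
    · rw [if_neg hm0, if_neg (by omega)]

lemma htilde_eq (hS : ShiftedCplx Δ) (c j : ℕ) (hj : j ≤ c) :
    htilde Δ c j = ((univ.filter (fun F : Finset (Fin n) =>
      F ∈ Δ ∧ F.card = c ∧ (sigmaSeg F).card = c - j)).card : ℤ) := by
  classical
  rw [htilde, hvec]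
  have hstep : ∀ i ∈ Finset.range (j+1),
      (-1 : ℤ) ^ (j - i) * ((c - i).choose (j - i) : ℤ) * (fvec (pureSkel Δ c) i : ℤ)
      = ∑ F ∈ univ.filter (fun F : Finset (Fin n) => F ∈ Δ ∧ F.card = c),
          (-1 : ℤ) ^ (j - i) * ((c - i).choose (j - i) : ℤ) * ((sigmaSeg F).card.choose (c - i) : ℤ) := by
    intro i hi
    rw [Finset.mem_range] at hi
    rw [fvec_pureSkel hS c i (by omega)]
    push_cast
    rw [Finset.mul_sum]
  rw [Finset.sum_congr rfl hstep, Finset.sum_comm]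
  have hinner : ∀ F ∈ univ.filter (fun F : Finset (Fin n) => F ∈ Δ ∧ F.card = c),
      ∑ i ∈ Finset.range (j+1),
        (-1 : ℤ) ^ (j - i) * ((c - i).choose (j - i) : ℤ) * ((sigmaSeg F).card.choose (c - i) : ℤ)
      = if (sigmaSeg F).card = c - j then (1 : ℤ) else 0 := by
    intro F hF
    rw [Finset.mem_filter] at hF
    obtain ⟨-, -, hcF⟩ := hF
    have hsle : (sigmaSeg F).card ≤ c := hcF ▸ Finset.card_le_card (sigmaSeg_subset F)
    exact binom_inv c j _ hj hsle
  rw [Finset.sum_congr rfl hinner, Finset.sum_boole, Finset.filter_filter]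
  congr 1
  congr 1
  apply Finset.filter_congr
  intro F _
  simp [and_assoc]

lemma htilde_sum (hS : ShiftedCplx Δ) (i j : ℕ) (hj : j ≤ i) :
    ∑ ℓ ∈ Finset.range (j+1), htilde Δ (i+1) ℓ
      = ((univ.filter (fun G : Finset (Fin n) =>
          G ∈ Δ ∧ G.card = i+1 ∧ i+1-j ≤ (sigmaSeg G).card)).card : ℤ) := by
  classical
  have hterm : ∀ ℓ ∈ Finset.range (j+1), htilde Δ (i+1) ℓ
      = ((univ.filter (fun G : Finset (Fin n) =>
          G ∈ Δ ∧ G.card = i+1 ∧ (sigmaSeg G).card = i+1-ℓ)).card : ℤ) := by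
    intro ℓ hℓ
    rw [Finset.mem_range] at hℓ
    exact htilde_eq hS (i+1) ℓ (by omega)
  rw [Finset.sum_congr rfl hterm]
  rw [← Nat.cast_sum]
  congr 1
  symm
  rw [Finset.card_eq_sum_card_fiberwise
    (f := fun G : Finset (Fin n) => i + 1 - (sigmaSeg G).card) (t := Finset.range (j+1))
    (fun G hG => by
      rw [Finset.mem_coe, Finset.mem_filter] at hG
      show i + 1 - (sigmaSeg G).card ∈ Finset.range (j+1)
      rw [Finset.mem_range]
      omega)]
  refine Finset.sum_congr rfl fun ℓ hℓ => ?_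
  rw [Finset.mem_range] at hℓ
  congr 1
  rw [Finset.filter_filter]
  apply Finset.filter_congr
  intro G _
  constructor
  · rintro ⟨⟨hΔ, hc, hge⟩, hfib⟩
    have hle : (sigmaSeg G).card ≤ i + 1 := hc ▸ Finset.card_le_card (sigmaSeg_subset G)
    exact ⟨hΔ, hc, by omega⟩
  · rintro ⟨hΔ, hc, hσ⟩
    exact ⟨⟨hΔ, hc, by omega⟩, by omega⟩

lemma card_fin_le {F : Finset (Fin n)} : F.card ≤ n := by
  simpa using Finset.card_le_univ F

/-- if `F` is a non-facet face, some element can be inserted. -/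

lemma nonfacet_insert (hC : IsCplx Δ) {F : Finset (Fin n)} (hF : F ∈ Δ)
    (hnf : ¬ IsFacet Δ F) : ∃ x, x ∉ F ∧ insert x F ∈ Δ := by
  have : ¬ ∀ G ∈ Δ, F ⊆ G → F = G := fun h => hnf ⟨hF, h⟩
  push_neg at this
  obtain ⟨H, hHΔ, hFH, hne⟩ := this
  obtain ⟨x, hx⟩ := Finset.sdiff_nonempty.2 (fun hsub => hne (Finset.Subset.antisymm hFH hsub))
  rw [Finset.mem_sdiff] at hx
  exact ⟨x, hx.2, hC H hHΔ _ (Finset.insert_subset hx.1 hFH)⟩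

/-- `e` (value `n-1-(i-j)`) is not in a face with `σ`-card `i-j`, provided `i-j < n`. -/

lemma e_not_mem {i j : ℕ} {F : Finset (Fin n)} (hσF : (sigmaSeg F).card = i - j)
    (hlt : i - j < n) {e : Fin n} (he : (e : ℕ) = n-1-(i-j)) : e ∉ F := by
  intro heF
  have : e ∈ sigmaSeg F := by
    rw [mem_sigmaSeg]
    intro l hl
    rcases eq_or_lt_of_le hl with rfl | hl'
    · exact heF
    · have : n - (i - j) ≤ (l : ℕ) := by
        have := hl'
        have hlv : (e : ℕ) < (l : ℕ) := this
        omega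
      exact sigmaSeg_subset F (mem_sigmaSeg_iff_card.2 (by omega))
  have := mem_sigmaSeg_iff_card.1 this
  omega

lemma nonfacet_count (hC : IsCplx Δ) (hS : ShiftedCplx Δ) (i j : ℕ) (hj : j ≤ i) :
    (univ.filter (fun G : Finset (Fin n) =>
        G ∈ Δ ∧ G.card = i+1 ∧ i+1-j ≤ (sigmaSeg G).card)).card
    = (univ.filter (fun F : Finset (Fin n) =>
        (F ∈ Δ ∧ F.card = i ∧ (sigmaSeg F).card = i - j) ∧ ¬ IsFacet Δ F)).card := by
  classical
  rcases Nat.eq_zero_or_pos n with hn | hn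
  · subst hn
    have h1 : (univ.filter (fun G : Finset (Fin 0) =>
        G ∈ Δ ∧ G.card = i+1 ∧ i+1-j ≤ (sigmaSeg G).card)) = ∅ := by
      apply Finset.filter_false_of_mem
      intro G _
      rintro ⟨-, hc, -⟩
      have : G.card ≤ 0 := card_fin_le
      omega
    have h2 : (univ.filter (fun F : Finset (Fin 0) =>
        (F ∈ Δ ∧ F.card = i ∧ (sigmaSeg F).card = i - j) ∧ ¬ IsFacet Δ F)) = ∅ := by
      apply Finset.filter_false_of_mem
      intro F _
      rintro ⟨⟨hΔ, -, -⟩, hnf⟩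
      obtain ⟨x, -, -⟩ := nonfacet_insert hC hΔ hnf
      exact x.elim0
    rw [h1, h2]
  · set e : Fin n := ⟨n-1-(i-j), by omega⟩ with he
    have hev : (e : ℕ) = n-1-(i-j) := rfl
    apply Finset.card_nbij' (fun G => G.erase e) (fun F => insert e F)
    -- forward: G ↦ G.erase e lands in nonfacets
    · intro G hG
      rw [Finset.mem_coe, Finset.mem_filter] at hG
      obtain ⟨-, hΔ, hcG, hσG⟩ := hG
      have hn' : i + 1 ≤ n := hcG ▸ card_fin_le
      have heσ : e ∈ sigmaSeg G := by
        rw [mem_sigmaSeg_iff_card]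
        have hle : (sigmaSeg G).card ≤ i + 1 := hcG ▸ Finset.card_le_card (sigmaSeg_subset G)
        omega
      have heG : e ∈ G := sigmaSeg_subset G heσ
      rw [Finset.mem_coe, Finset.mem_filter]
      refine ⟨Finset.mem_univ _, ⟨hC G hΔ _ (Finset.erase_subset e G), ?_, ?_⟩, ?_⟩
      · rw [Finset.card_erase_of_mem heG, hcG]
        omega
      · -- sigma(G.erase e) = Ioi e
        have hIoi : sigmaSeg (G.erase e) = Finset.Ioi e := by
          apply Finset.Subset.antisymm
          · intro z hz
            rw [Finset.mem_Ioi]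
            by_contra hze
            push_neg at hze
            exact Finset.notMem_erase e G (mem_sigmaSeg.1 hz e hze)
          · intro z hz
            rw [Finset.mem_Ioi] at hz
            rw [mem_sigmaSeg]
            intro l hl
            have hel : e < l := lt_of_lt_of_le hz hl
            have hlσ : l ∈ sigmaSeg G := by
              rw [mem_sigmaSeg_iff_card]
              have : (e : ℕ) < (l : ℕ) := hel
              omega
            exact Finset.mem_erase.2 ⟨Fin.ne_of_gt hel, sigmaSeg_subset G hlσ⟩
        rw [hIoi, Fin.card_Ioi, hev]
        omega
      · rintro ⟨-, hmax⟩
        have heq : G.erase e = G := hmax G hΔ (Finset.erase_subset e G)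
        have h2 : e ∈ G.erase e := by rw [heq]; exact heG
        exact Finset.notMem_erase e G h2
    -- backward: F ↦ insert e F lands in G's
    · intro F hF
      rw [Finset.mem_coe, Finset.mem_filter] at hF
      obtain ⟨-, ⟨hΔ, hcF, hσF⟩, hnf⟩ := hF
      obtain ⟨x, hxF, hxΔ⟩ := nonfacet_insert hC hΔ hnf
      have hin : i < n := by
        have : (insert x F).card ≤ n := card_fin_le
        rw [Finset.card_insert_of_notMem hxF, hcF] at this
        omega
      have heF : e ∉ F := e_not_mem hσF (by omega) hev
      have hins : insert e F ∈ Δ := by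
        rcases eq_or_ne x e with rfl | hne
        · exact hxΔ
        · have hxe : x < e := by
            rcases lt_or_gt_of_ne hne with h | h
            · exact h
            · exfalso
              have hxσ : x ∈ sigmaSeg F := by
                rw [mem_sigmaSeg_iff_card, hσF]
                have : (e : ℕ) < (x : ℕ) := h
                omega
              exact hxF (sigmaSeg_subset F hxσ)
          have hstep := hS (insert x F) hxΔ x e hxe (Finset.mem_insert_self x F)
            (by rw [Finset.mem_insert]; push_neg; exact ⟨hne.symm, heF⟩)
          rwa [Finset.erase_insert hxF] at hstep
      rw [Finset.mem_coe, Finset.mem_filter]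
      refine ⟨Finset.mem_univ _, hins, ?_, ?_⟩
      · rw [Finset.card_insert_of_notMem heF, hcF]
      · have hIci : Finset.Ici e ⊆ sigmaSeg (insert e F) := by
          intro z hz
          rw [Finset.mem_Ici] at hz
          rw [mem_sigmaSeg]
          intro l hl
          have hel : e ≤ l := le_trans hz hl
          rcases eq_or_lt_of_le hel with rfl | hel'
          · exact Finset.mem_insert_self _ _
          · have hlσ : l ∈ sigmaSeg F := by
              rw [mem_sigmaSeg_iff_card, hσF]
              have : (e : ℕ) < (l : ℕ) := hel'
              omega
            exact Finset.mem_insert_of_mem (sigmaSeg_subset F hlσ)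
        have := Finset.card_le_card hIci
        rw [Fin.card_Ici, hev] at this
        beta_reduce
        omega
    -- inverses
    · intro G hG
      rw [Finset.mem_coe, Finset.mem_filter] at hG
      obtain ⟨-, hΔ, hcG, hσG⟩ := hG
      have hn' : i + 1 ≤ n := hcG ▸ card_fin_le
      have heσ : e ∈ sigmaSeg G := by
        rw [mem_sigmaSeg_iff_card]
        have hle : (sigmaSeg G).card ≤ i + 1 := hcG ▸ Finset.card_le_card (sigmaSeg_subset G)
        omega
      exact Finset.insert_erase (sigmaSeg_subset G heσ)
    · intro F hF
      rw [Finset.mem_coe, Finset.mem_filter] at hF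
      obtain ⟨-, ⟨hΔ, hcF, hσF⟩, hnf⟩ := hF
      obtain ⟨x, hxF, hxΔ⟩ := nonfacet_insert hC hΔ hnf
      have hin : i < n := by
        have : (insert x F).card ≤ n := card_fin_le
        rw [Finset.card_insert_of_notMem hxF, hcF] at this
        omega
      exact Finset.erase_insert (e_not_mem hσF (by omega) hev)

end AuxProof

/-- (Equation (2)) For a shifted complex `Δ` of dimension `d-1` on `[n]`,
the `h`-triangle entry `h_{i,j}` counts the facets `F` with `|F| = i` and `|σ(F)| = i - j`. -/
theorem htri_counts_facets (n d : ℕ) (Δ : Set (Finset (Fin n)))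
    (hC : IsCplx Δ) (hS : ShiftedCplx Δ)
    (hdim : ∀ F ∈ Δ, F.card ≤ d) (hdim' : ∃ F ∈ Δ, F.card = d) :
    ∀ i j : ℕ, j ≤ i → i ≤ d →
      htri Δ i j =
        ({F : Finset (Fin n) | IsFacet Δ F ∧ F.card = i ∧ (sigmaSeg F).card = i - j}.ncard : ℤ) := by
  intro i j hji hid
  classical
  unfold htri
  rw [htilde_eq hS i j hji, htilde_sum hS i j hji, nonfacet_count hC hS i j hji]
  have hsplit := Finset.card_filter_add_card_filter_not
    (s := univ.filter (fun F : Finset (Fin n) =>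
      F ∈ Δ ∧ F.card = i ∧ (sigmaSeg F).card = i - j)) (IsFacet Δ)
  have hNF : univ.filter (fun F : Finset (Fin n) =>
        (F ∈ Δ ∧ F.card = i ∧ (sigmaSeg F).card = i - j) ∧ ¬ IsFacet Δ F)
      = (univ.filter (fun F : Finset (Fin n) =>
          F ∈ Δ ∧ F.card = i ∧ (sigmaSeg F).card = i - j)).filter
            (fun F => ¬ IsFacet Δ F) := by
    rw [Finset.filter_filter]
  have hFacetSet : {F : Finset (Fin n) |
        IsFacet Δ F ∧ F.card = i ∧ (sigmaSeg F).card = i - j}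
      = ↑((univ.filter (fun F : Finset (Fin n) =>
          F ∈ Δ ∧ F.card = i ∧ (sigmaSeg F).card = i - j)).filter (IsFacet Δ)) := by
    ext F
    simp only [Set.mem_setOf_eq, Finset.coe_filter, Finset.mem_filter, Finset.mem_univ, true_and]
    constructor
    · rintro ⟨hf, hc, hσ⟩
      exact ⟨⟨hf.1, hc, hσ⟩, hf⟩
    · rintro ⟨⟨-, hc, hσ⟩, hf⟩
      exact ⟨hf, hc, hσ⟩
  rw [hFacetSet, Set.ncard_coe_finset, hNF]
  omega
end
end
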